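/- arXiv:1203.3162 — 3 statements merged into one kernel-verified Lean document; each statement's English description precedes it below -/
import Mathlib

section
/- Every line L in P^2 over F_{q^2} either meets the Hermitian curve X in exactly q+1 distinct F_{q^2}-rational points, or L is tangent to X at a point P with contact order q+1 and meets X in no F_{q^2}-rational point other than P. -/
/-- The homogeneous Hermitian form `y^q z + y z^q - x^(q+1)` evaluated on a vector
`v = (x, y, z)` of `F³`. -/
def hermEq (q : ℕ) {F : Type} [Field F] (v : Fin 3 → F) : F :=
  (v 1) ^ q * (v 2) + (v 1) * (v 2) ^ q - (v 0) ^ (q + 1)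

open Polynomial Module

namespace HermProof

variable {q : ℕ} {F : Type} [Field F]

/-- The sesquilinear companion form of the Hermitian form. -/
def hermB (q : ℕ) {F : Type} [Field F] (u v : Fin 3 → F) : F :=
  u 1 ^ q * v 2 + u 2 ^ q * v 1 - u 0 ^ q * v 0

lemma lipair_iff (u w : Fin 3 → F) :
    LinearIndependent F ![u, w] ↔ ∀ a b : F, a • u + b • w = 0 → a = 0 ∧ b = 0 := by
  rw [Fintype.linearIndependent_iff]
  constructor
  · intro h a b hab
    have h2 := h ![a, b] (by simpa [Fin.sum_univ_two] using hab)
    exact ⟨h2 0, h2 1⟩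
  · intro h g hg
    have h2 := h (g 0) (g 1) (by simpa [Fin.sum_univ_two] using hg)
    intro i; fin_cases i
    · exact h2.1
    · exact h2.2

lemma hermB_diag (x : Fin 3 → F) : hermB q x x = hermEq q x := by
  simp only [hermB, hermEq, pow_succ]; ring

lemma herm_smul (a : F) (x : Fin 3 → F) :
    hermEq q (a • x) = a ^ q * a * hermEq q x := by
  simp only [hermEq, Pi.smul_apply, smul_eq_mul, mul_pow, pow_succ]
  ring

lemma herm_expand (hadd : ∀ x y : F, (x + y) ^ q = x ^ q + y ^ q)
    (u w : Fin 3 → F) (s t : F) :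
    hermEq q (s • u + t • w) =
      s ^ q * s * hermEq q u + s ^ q * t * hermB q u w
        + t ^ q * s * hermB q w u + t ^ q * t * hermEq q w := by
  have key : ∀ i : Fin 3, ((s • u + t • w) i) ^ q = s ^ q * (u i) ^ q + t ^ q * (w i) ^ q := by
    intro i
    simp only [Pi.add_apply, Pi.smul_apply, smul_eq_mul]
    rw [hadd, mul_pow, mul_pow]
  simp only [hermEq, hermB, pow_succ]
  simp only [key]
  simp only [Pi.add_apply, Pi.smul_apply, smul_eq_mul]
  ring

lemma hermB_conj (hadd : ∀ x y : F, (x + y) ^ q = x ^ q + y ^ q)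
    (hqq : ∀ x : F, (x ^ q) ^ q = x) (u v : Fin 3 → F) :
    (hermB q u v) ^ q = hermB q v u := by
  have hsub : ∀ x y : F, (x - y) ^ q = x ^ q - y ^ q := by
    intro x y
    have h1 := hadd (x - y) y
    have h2 : x - y + y = x := by ring
    rw [h2] at h1
    rw [h1]; ring
  simp only [hermB, hsub, hadd, mul_pow, hqq]
  ring

lemma hermB_left (hadd : ∀ x y : F, (x + y) ^ q = x ^ q + y ^ q)
    (x y u : Fin 3 → F) (c : F) :
    hermB q (x + c • y) u = hermB q x u + c ^ q * hermB q y u := by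
  simp only [hermB, Pi.add_apply, Pi.smul_apply, smul_eq_mul, hadd, mul_pow]
  ring

lemma span_pair_rank (u w : Fin 3 → F) (h : LinearIndependent F ![u, w]) :
    Module.finrank F (Submodule.span F ({u, w} : Set (Fin 3 → F))) = 2 := by
  have hr : Set.range ![u, w] = {u, w} := by
    ext x; simp only [Set.mem_range, Fin.exists_fin_two, Matrix.cons_val_zero,
      Matrix.cons_val_one, Matrix.head_cons, Set.mem_insert_iff, Set.mem_singleton_iff]
    tauto
  rw [← hr, finrank_span_eq_card h, Fintype.card_fin]

lemma li_swap {u w : Fin 3 → F} (h : LinearIndependent F ![u, w]) :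
    LinearIndependent F ![w, u] := by
  rw [lipair_iff] at h ⊢
  intro a b hab
  have := h b a (by rw [← hab]; abel)
  exact ⟨this.2, this.1⟩

lemma li_shear {u w : Fin 3 → F} (c : F) (h : LinearIndependent F ![u, w]) :
    LinearIndependent F ![u + c • w, w] := by
  rw [lipair_iff] at h ⊢
  intro a b hab
  have h2 : a • u + (a * c + b) • w = 0 := by
    rw [← hab]; module
  obtain ⟨ha0, hb0⟩ := h a (a * c + b) h2
  refine ⟨ha0, ?_⟩
  rw [ha0] at hb0
  simpa using hb0

lemma span_shear (u w : Fin 3 → F) (c : F) :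
    Submodule.span F ({u + c • w, w} : Set (Fin 3 → F)) = Submodule.span F {u, w} := by
  apply le_antisymm
  · rw [Submodule.span_le]
    rintro x (rfl | rfl)
    · exact Submodule.mem_span_pair.mpr ⟨1, c, by module⟩
    · exact Submodule.mem_span_pair.mpr ⟨0, 1, by module⟩
  · rw [Submodule.span_le]
    rintro x (rfl | rfl)
    · exact Submodule.mem_span_pair.mpr ⟨1, -c, by module⟩
    · exact Submodule.mem_span_pair.mpr ⟨0, 1, by module⟩

lemma herm_nondeg (hq0 : q ≠ 0)
    (hadd : ∀ x y : F, (x + y) ^ q = x ^ q + y ^ q)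
    (hqq : ∀ x : F, (x ^ q) ^ q = x)
    (u w : Fin 3 → F) (hli : LinearIndependent F ![u, w])
    (h1 : hermB q u u = 0) (h2 : hermB q u w = 0)
    (h3 : hermB q w u = 0) (h4 : hermB q w w = 0) : False := by
  set D : LinearMap.BilinForm F (Fin 3 → F) :=
    LinearMap.mk₂ F (fun x y => x 1 * y 2 + x 2 * y 1 - x 0 * y 0)
      (by intros; simp only [Pi.add_apply]; ring)
      (by intros; simp only [Pi.smul_apply, smul_eq_mul]; ring)
      (by intros; simp only [Pi.add_apply]; ring)
      (by intros; simp only [Pi.smul_apply, smul_eq_mul]; ring) with hD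
  have hDapp : ∀ x y : Fin 3 → F, D x y = x 1 * y 2 + x 2 * y 1 - x 0 * y 0 := by
    intro x y; rw [hD]; simp [LinearMap.mk₂_apply]
  have hrefl : D.IsRefl := by
    intro x y hxy
    have hsymm : D y x = D x y := by rw [hDapp, hDapp]; ring
    rw [hsymm, hxy]
  have hnd : D.Nondegenerate := by
    refine (LinearMap.IsRefl.nondegenerate_iff_separatingLeft hrefl).mpr ?_
    intro x hx
    have e0 := hx (Pi.single 0 1)
    have e1 := hx (Pi.single 2 1)
    have e2 := hx (Pi.single 1 1)
    rw [hDapp] at e0 e1 e2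
    simp [Pi.single_apply] at e0 e1 e2
    funext i
    fin_cases i <;> simp [e0, e1, e2]
  -- the semilinear twist
  set σ : (Fin 3 → F) → (Fin 3 → F) := fun v i => (v i) ^ q with hσ
  have hBD : ∀ x y : Fin 3 → F, D (σ x) y = hermB q x y := by
    intro x y; rw [hDapp]; simp [hσ, hermB]
  have hliσ : LinearIndependent F ![σ u, σ w] := by
    rw [lipair_iff]
    intro a b hab
    have hz : (a ^ q) • u + (b ^ q) • w = 0 := by
      funext i
      have hi := congrFun hab i
      simp only [Pi.add_apply, Pi.smul_apply, smul_eq_mul, Pi.zero_apply, hσ] at hi ⊢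
      have hpow : (a ^ q * u i + b ^ q * w i) ^ q = 0 := by
        rw [hadd, mul_pow, mul_pow, hqq, hqq]
        exact hi
      exact pow_eq_zero_iff hq0 |>.mp hpow
    obtain ⟨ha, hb⟩ := (lipair_iff u w).mp hli _ _ hz
    constructor
    · have := congrArg (fun x : F => x ^ q) ha
      simpa [hqq, zero_pow hq0] using this
    · have := congrArg (fun x : F => x ^ q) hb
      simpa [hqq, zero_pow hq0] using this
  set U : Submodule F (Fin 3 → F) := Submodule.span F {σ u, σ w} with hU
  have hUrank : Module.finrank F U = 2 := span_pair_rank _ _ hliσ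
  have horth : Submodule.span F ({u, w} : Set (Fin 3 → F)) ≤ D.orthogonal U := by
    rw [Submodule.span_le]
    have key : ∀ x : Fin 3 → F, hermB q u x = 0 → hermB q w x = 0 → x ∈ D.orthogonal U := by
      intro x hux hwx
      rw [LinearMap.BilinForm.mem_orthogonal_iff]
      intro n hn
      rw [hU] at hn
      obtain ⟨r, s, rfl⟩ := Submodule.mem_span_pair.mp hn
      show D _ x = 0
      rw [map_add, LinearMap.add_apply, map_smul, map_smul, LinearMap.smul_apply,
        LinearMap.smul_apply, hBD, hBD, hux, hwx]
      simp
    rintro x (rfl | rfl)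
    · exact key x h1 h3
    · exact key x h2 h4
  have hle : (2 : ℕ) ≤ Module.finrank F (D.orthogonal U) := by
    calc (2 : ℕ) = Module.finrank F (Submodule.span F ({u, w} : Set (Fin 3 → F))) :=
          (span_pair_rank _ _ hli).symm
      _ ≤ _ := Submodule.finrank_mono horth
  have hone : Module.finrank F (D.orthogonal U) = 1 := by
    rw [LinearMap.BilinForm.finrank_orthogonal hnd U, hUrank]
    simp [Module.finrank_fin_fun]
  omega
lemma exists_trace_ne (q : ℕ) (hq2 : 2 ≤ q) {F : Type} [Field F] [Fintype F]
    (hF : Fintype.card F = q ^ 2) : ∃ μ : F, μ ^ q + μ ≠ 0 := by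
  by_contra h
  push_neg at h
  have hzero : (Polynomial.X ^ q + Polynomial.X : F[X]) = 0 := by
    apply Polynomial.eq_zero_of_natDegree_lt_card_of_eval_eq_zero _
      (f := (id : F → F)) Function.injective_id
    · intro x; simp [h x]
    · have hdeg : (Polynomial.X ^ q + Polynomial.X : F[X]).natDegree ≤ q := by
        refine le_trans (Polynomial.natDegree_add_le _ _) ?_
        simp [Polynomial.natDegree_X_pow, Polynomial.natDegree_X]
        omega
      have h2 : 2 * q ≤ q * q := Nat.mul_le_mul_right q hq2
      have h3 : q ^ 2 = q * q := pow_two q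
      omega
  have h1 : ((Polynomial.X : F[X]) ^ q + Polynomial.X).coeff q = (0 : F[X]).coeff q := by
    rw [hzero]
  rw [Polynomial.coeff_add, Polynomial.coeff_X_pow, if_pos rfl, Polynomial.coeff_X,
    if_neg (by omega : ¬(1 : ℕ) = q), Polynomial.coeff_zero, add_zero] at h1
  exact one_ne_zero h1

lemma count_pow_eq (q : ℕ) (hq2 : 2 ≤ q) {F : Type} [Field F] [Fintype F]
    (hF : Fintype.card F = q ^ 2) (m : F) (hm0 : m ≠ 0) (hm1 : m ^ (q - 1) = 1) :
    Nat.card {x : F // x ^ (q + 1) = m} = q + 1 := by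
  classical
  have bound : ∀ (n : ℕ) (a : F), n ≠ 0 → Fintype.card {x : F // x ^ n = a} ≤ n := by
    intro n a hn
    rw [Fintype.card_subtype]
    have hsub : (Finset.univ.filter fun x : F => x ^ n = a) ⊆
        (Polynomial.nthRoots n a).toFinset := by
      intro x hx
      rw [Finset.mem_filter] at hx
      rw [Multiset.mem_toFinset, Polynomial.mem_nthRoots (Nat.pos_of_ne_zero hn)]
      exact hx.2
    exact le_trans (Finset.card_le_card hsub)
      (le_trans (Multiset.toFinset_card_le _) (Polynomial.card_nthRoots n a))
  have hq1 : (q + 1) * (q - 1) = q ^ 2 - 1 := by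
    obtain ⟨k, rfl⟩ : ∃ k, q = k + 1 := ⟨q - 1, by omega⟩
    have h1 : (k + 1) ^ 2 = k * k + 2 * k + 1 := by ring
    have h2 : (k + 1 + 1) * (k + 1 - 1) = k * k + 2 * k := by
      simp; ring
    omega
  have hcardu : Fintype.card Fˣ = q ^ 2 - 1 := by rw [Fintype.card_units, hF]
  set φ : Fˣ →* Fˣ := powMonoidHom (q + 1) with hφ
  -- bound on the kernel
  have hker_le : Fintype.card φ.ker ≤ q + 1 := by
    have hinj : Function.Injective
        (fun u : φ.ker => (⟨((u : Fˣ) : F), by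
          have hu := u.2
          simp only [MonoidHom.mem_ker, hφ, powMonoidHom_apply] at hu
          simpa using congrArg Units.val hu⟩ :
          {x : F // x ^ (q + 1) = 1})) := by
      intro a b hab
      ext
      exact congrArg Subtype.val hab
    exact le_trans (Fintype.card_le_of_injective _ hinj) (bound (q + 1) 1 (by omega))
  -- bound on the range
  have hran_pow : ∀ u : Fˣ, u ∈ φ.range → u ^ (q - 1) = 1 := by
    intro u hu
    obtain ⟨x, hx⟩ := hu
    rw [hφ, powMonoidHom_apply] at hx
    rw [← hx, ← pow_mul, hq1, ← hcardu, pow_card_eq_one]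
  have hran_le : Fintype.card φ.range ≤ q - 1 := by
    have hinj : Function.Injective
        (fun u : φ.range => (⟨((u : Fˣ) : F), by
          have hu := hran_pow u.1 u.2
          simpa using congrArg Units.val hu⟩ :
          {x : F // x ^ (q - 1) = 1})) := by
      intro a b hab
      ext
      exact congrArg Subtype.val hab
    exact le_trans (Fintype.card_le_of_injective _ hinj) (bound (q - 1) 1 (by omega))
  -- the product formula
  have hmul : Fintype.card φ.ker * Fintype.card φ.range = q ^ 2 - 1 := by
    have h := Subgroup.card_eq_card_quotient_mul_card_subgroup φ.ker
    rw [Nat.card_eq_fintype_card, Nat.card_eq_fintype_card, Nat.card_eq_fintype_card,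
      Fintype.card_congr (QuotientGroup.quotientKerEquivRange φ).toEquiv] at h
    rw [hcardu] at h
    rw [Nat.mul_comm]
    exact h.symm
  -- conclude the exact cardinalities
  have hq1pos : 0 < q - 1 := by omega
  have hker_eq : Fintype.card φ.ker = q + 1 := by
    have h1 : Fintype.card φ.ker * Fintype.card φ.range ≤ Fintype.card φ.ker * (q - 1) :=
      Nat.mul_le_mul_left _ hran_le
    have h2 : Fintype.card φ.ker * (q - 1) ≤ (q + 1) * (q - 1) :=
      Nat.mul_le_mul_right _ hker_le
    have h3 : Fintype.card φ.ker * (q - 1) = (q + 1) * (q - 1) := by omega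
    exact Nat.eq_of_mul_eq_mul_right hq1pos h3
  have hran_eq : Fintype.card φ.range = q - 1 := by
    rw [hker_eq] at hmul
    have h4 : (q + 1) * Fintype.card φ.range = (q + 1) * (q - 1) := by omega
    exact Nat.eq_of_mul_eq_mul_left (by omega) h4
  -- the range is exactly the (q-1)-st roots of unity; in particular m is a (q+1)-st power
  obtain ⟨x₀, hx₀⟩ : ∃ x : Fˣ, x ^ (q + 1) = Units.mk0 m hm0 := by
    set RF := Finset.univ.filter (fun y : Fˣ => ∃ x : Fˣ, x ^ (q + 1) = y) with hRF
    set SF := Finset.univ.filter (fun y : Fˣ => y ^ (q - 1) = 1) with hSF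
    have hRS : RF ⊆ SF := by
      intro y hy
      rw [hRF, Finset.mem_filter] at hy
      rw [hSF, Finset.mem_filter]
      refine ⟨Finset.mem_univ _, ?_⟩
      apply hran_pow
      obtain ⟨x, hx⟩ := hy.2
      exact ⟨x, by rw [hφ, powMonoidHom_apply, hx]⟩
    have hcardRF : RF.card = q - 1 := by
      rw [← hran_eq, hRF, ← Fintype.card_subtype]
      apply Fintype.card_congr
      apply Equiv.subtypeEquivRight
      intro y
      simp [hφ, MonoidHom.mem_range, powMonoidHom_apply, eq_comm]
    have hcardSF : SF.card ≤ q - 1 := by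
      rw [hSF, ← Fintype.card_subtype]
      have hinj : Function.Injective
          (fun u : {y : Fˣ // y ^ (q - 1) = 1} => (⟨((u : Fˣ) : F), by
            have hu := u.2
            simpa using congrArg Units.val hu⟩ :
            {x : F // x ^ (q - 1) = 1})) := by
        intro a b hab
        ext
        exact congrArg Subtype.val hab
      exact le_trans (Fintype.card_le_of_injective _ hinj) (bound (q - 1) 1 (by omega))
    have hEq : RF = SF := Finset.eq_of_subset_of_card_le hRS (by omega)
    have hmem : Units.mk0 m hm0 ∈ SF := by
      rw [hSF, Finset.mem_filter]
      refine ⟨Finset.mem_univ _, ?_⟩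
      ext
      rw [Units.val_pow_eq_pow_val]
      simpa using hm1
    rw [← hEq, hRF, Finset.mem_filter] at hmem
    exact hmem.2
  -- finally, build the bijection between solutions and the kernel
  have hequiv : {x : F // x ^ (q + 1) = m} ≃ φ.ker := by
    refine
      { toFun := fun x => ⟨Units.mk0 x.1 (fun hc => hm0 (by
            rw [← x.2, hc, zero_pow (by omega : q + 1 ≠ 0)])) * x₀⁻¹, ?_⟩
        invFun := fun u => ⟨((u : Fˣ) * x₀ : Fˣ), ?_⟩
        left_inv := ?_
        right_inv := ?_ }
    · rename_i x
      rw [MonoidHom.mem_ker]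
      simp only [hφ, powMonoidHom_apply]
      rw [mul_pow, inv_pow, hx₀]
      apply mul_inv_eq_one.mpr
      ext
      rw [Units.val_pow_eq_pow_val]
      simpa using x.2
    · rename_i u
      have hu := u.2
      simp only [MonoidHom.mem_ker, hφ, powMonoidHom_apply] at hu
      show (((u : Fˣ) * x₀ : Fˣ) : F) ^ (q + 1) = m
      rw [← Units.val_pow_eq_pow_val, mul_pow, hu, one_mul, hx₀]
      simp
    · intro x
      ext
      simp
    · intro u
      ext
      simp
  rw [Nat.card_congr hequiv, Nat.card_eq_fintype_card, hker_eq]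
end HermProof


open HermProof in
/-- Every line of `P²(F_{q²})` (given by a 2-dimensional subspace `W ⊆ F³`) either
meets the Hermitian curve in exactly `q+1` rational points, or it is tangent to it at
a point `P` with contact order `q+1` (the restriction of the curve equation to a
parametrization of the line based at `P` is `c·t^(q+1)`) and meets the curve in no
rational point other than `P`. -/
theorem line_meets_hermitian (p e q : ℕ) (hp : p.Prime) (hq : q = p ^ e) (he : 0 < e)
    (F : Type) [Field F] [Fintype F] [CharP F p] (hF : Fintype.card F = q ^ 2)
    (W : Submodule F (Fin 3 → F)) (hW : Module.finrank F W = 2) :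
    Nat.card {P : Projectivization F (Fin 3 → F) // P.rep ∈ W ∧ hermEq q P.rep = 0}
        = q + 1 ∨
    (∃ P : Projectivization F (Fin 3 → F), P.rep ∈ W ∧ hermEq q P.rep = 0 ∧
      {Q : Projectivization F (Fin 3 → F) | Q.rep ∈ W ∧ hermEq q Q.rep = 0} = {P} ∧
      ∃ (u w : Fin 3 → F) (hu : u ≠ 0) (c : F),
        LinearIndependent F ![u, w] ∧ Submodule.span F {u, w} = W ∧
        Projectivization.mk F u hu = P ∧ c ≠ 0 ∧
        ∀ s t : F, hermEq q (s • u + t • w) = c * t ^ (q + 1)) := by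

  classical
  haveI : Fact p.Prime := ⟨hp⟩
  have hq2 : 2 ≤ q := by
    rw [hq]
    calc 2 ≤ p := hp.two_le
      _ = p ^ 1 := (pow_one p).symm
      _ ≤ p ^ e := Nat.pow_le_pow_right hp.pos he
  have hq0 : q ≠ 0 := by omega
  have hadd : ∀ x y : F, (x + y) ^ q = x ^ q + y ^ q := by
    intro x y
    have h := add_pow_char_pow (R := F) (p := p) (n := e) (x := x) (y := y)
    rwa [← hq] at h
  have hqq : ∀ x : F, (x ^ q) ^ q = x := by
    intro x
    rw [← pow_mul, show q * q = q ^ 2 from (pow_two q).symm, ← hF]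
    exact FiniteField.pow_card x
  have hneg : ∀ x : F, (-x) ^ q = -(x ^ q) := by
    intro x
    have h0 := hadd x (-x)
    rw [add_neg_cancel, zero_pow hq0] at h0
    linear_combination -h0
  -- a basis of W as a pair of vectors of F³
  let b := Module.finBasisOfFinrankEq F W hW
  set E1 : Fin 3 → F := ((b 0 : W) : Fin 3 → F) with hE1
  set E2 : Fin 3 → F := ((b 1 : W) : Fin 3 → F) with hE2
  have hliE : LinearIndependent F ![E1, E2] := by
    have hmap := b.linearIndependent.map' W.subtype (Submodule.ker_subtype W)
    have heq : ![E1, E2] = (W.subtype ∘ b) := by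
      funext i; fin_cases i <;> rfl
    rw [heq]; exact hmap
  have hspanE : Submodule.span F ({E1, E2} : Set (Fin 3 → F)) = W := by
    have h1 : W.subtype '' (Set.range b) = {E1, E2} := by
      ext x
      simp only [Set.mem_image, Set.mem_range, Set.mem_insert_iff, Set.mem_singleton_iff]
      constructor
      · rintro ⟨y, ⟨i, rfl⟩, rfl⟩
        fin_cases i
        · left; rfl
        · right; rfl
      · rintro (rfl | rfl)
        · exact ⟨b 0, ⟨0, rfl⟩, rfl⟩
        · exact ⟨b 1, ⟨1, rfl⟩, rfl⟩
    rw [← h1, Submodule.span_image, b.span_eq, Submodule.map_subtype_top]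
  -- find a pair of generators the first of which is non-isotropic
  obtain ⟨u₁, u₂, hli, hspan, hane⟩ : ∃ u₁ u₂ : Fin 3 → F,
      LinearIndependent F ![u₁, u₂] ∧
      Submodule.span F ({u₁, u₂} : Set (Fin 3 → F)) = W ∧ hermEq q u₁ ≠ 0 := by
    by_cases h1 : hermEq q E1 ≠ 0
    · exact ⟨E1, E2, hliE, hspanE, h1⟩
    · by_cases h2 : hermEq q E2 ≠ 0
      · refine ⟨E2, E1, li_swap hliE, ?_, h2⟩
        rw [Set.pair_comm]; exact hspanE
      · push_neg at h1 h2
        have hbne : hermB q E1 E2 ≠ 0 := by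
          intro hb0
          refine herm_nondeg hq0 hadd hqq E1 E2 hliE ?_ hb0 ?_ ?_
          · rw [hermB_diag, h1]
          · rw [← hermB_conj hadd hqq, hb0, zero_pow hq0]
          · rw [hermB_diag, h2]
        obtain ⟨μ, hμ⟩ := exists_trace_ne q hq2 hF
        refine ⟨E1 + (μ / hermB q E1 E2) • E2, E2, li_shear _ hliE, ?_, ?_⟩
        · rw [span_shear]; exact hspanE
        · have hexp := herm_expand hadd E1 E2 1 (μ / hermB q E1 E2)
          rw [one_smul] at hexp
          have hBconj : hermB q E2 E1 = (hermB q E1 E2) ^ q :=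
            (hermB_conj hadd hqq E1 E2).symm
          have hlb : μ / hermB q E1 E2 * hermB q E1 E2 = μ := div_mul_cancel₀ μ hbne
          have hlbq : (μ / hermB q E1 E2) ^ q * (hermB q E1 E2) ^ q = μ ^ q := by
            rw [← mul_pow, hlb]
          rw [hexp, h1, h2, hBconj, one_pow]
          intro hzero'
          apply hμ
          linear_combination hzero' - hlb - hlbq
  -- diagonalize: replace u₂ by a vector orthogonal to u₁
  have haq : (hermEq q u₁) ^ q = hermEq q u₁ := by
    rw [← hermB_diag, hermB_conj hadd hqq]
  set v : Fin 3 → F := u₂ + (-(hermB q u₁ u₂ / hermEq q u₁)) • u₁ with hv_def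
  have hliv : LinearIndependent F ![v, u₁] := li_shear _ (li_swap hli)
  have hspanv : Submodule.span F ({v, u₁} : Set (Fin 3 → F)) = W := by
    rw [hv_def, span_shear, Set.pair_comm]; exact hspan
  have hBvu : hermB q v u₁ = 0 := by
    rw [hv_def, hermB_left hadd, hermB_diag, hneg, div_pow, haq,
      ← hermB_conj hadd hqq u₁ u₂]
    field_simp; ring
  have hBuv : hermB q u₁ v = 0 := by
    rw [← hermB_conj hadd hqq v u₁, hBvu, zero_pow hq0]
  have hkey : ∀ s t : F, hermEq q (s • v + t • u₁) =
      hermEq q v * (s ^ q * s) + hermEq q u₁ * (t ^ q * t) := by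
    intro s t
    rw [herm_expand hadd, hBvu, hBuv]
    ring
  have hdq : (hermEq q v) ^ q = hermEq q v := by
    rw [← hermB_diag, hermB_conj hadd hqq]
  by_cases hd0 : hermEq q v = 0
  · -- tangent case
    right
    have hvne : v ≠ 0 := by simpa using hliv.ne_zero 0
    have hvW : v ∈ W := by
      rw [← hspanv]; exact Submodule.subset_span (Set.mem_insert _ _)
    have hPrep : (Projectivization.mk F v hvne).rep ∈ W ∧
        hermEq q (Projectivization.mk F v hvne).rep = 0 := by
      obtain ⟨α, hα⟩ := Projectivization.exists_smul_eq_mk_rep F v hvne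
      constructor
      · rw [← hα]; exact Submodule.smul_mem _ _ hvW
      · rw [← hα, Units.smul_def, herm_smul, hd0, mul_zero]
    refine ⟨Projectivization.mk F v hvne, hPrep.1, hPrep.2, ?_, v, u₁, hvne,
      hermEq q u₁, hliv, hspanv, rfl, hane, ?_⟩
    · ext Q
      simp only [Set.mem_setOf_eq, Set.mem_singleton_iff]
      constructor
      · rintro ⟨hQW, hQH⟩
        rw [← hspanv] at hQW
        obtain ⟨s, t, hst⟩ := Submodule.mem_span_pair.mp hQW
        have hk := hkey s t
        rw [hst, hQH, hd0, zero_mul, zero_add] at hk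
        have ht : t = 0 := by
          rcases mul_eq_zero.mp hk.symm with h | h
          · exact absurd h hane
          · rcases mul_eq_zero.mp h with h' | h'
            · exact (pow_eq_zero_iff hq0).mp h'
            · exact h'
        rw [ht, zero_smul, add_zero] at hst
        have hs : s ≠ 0 := by
          rintro rfl
          rw [zero_smul] at hst
          exact Q.rep_nonzero hst.symm
        rw [← Projectivization.mk_rep Q, Projectivization.mk_eq_mk_iff']
        exact ⟨s, hst⟩
      · rintro rfl
        exact hPrep
    · intro s t
      rw [hkey s t, hd0, zero_mul, zero_add, pow_succ]
  · -- secant case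
    left
    set m : F := -hermEq q u₁ / hermEq q v with hm_def
    have hm0 : m ≠ 0 := div_ne_zero (neg_ne_zero.mpr hane) hd0
    have hmq : m ^ q = m := by
      rw [hm_def, div_pow, hneg, haq, hdq]
    have hm1 : m ^ (q - 1) = 1 := by
      have hs : m ^ (q - 1) * m = 1 * m := by
        rw [one_mul, ← pow_succ, show q - 1 + 1 = q by omega, hmq]
      exact mul_right_cancel₀ hm0 hs
    have hκdef : ∀ x : {x : F // x ^ (q + 1) = m}, x.1 • v + u₁ ≠ 0 := by
      intro x hc
      have h := (lipair_iff v u₁).mp hliv x.1 1 (by rw [one_smul]; exact hc)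
      exact one_ne_zero h.2
    have hκmem : ∀ x : {x : F // x ^ (q + 1) = m},
        (Projectivization.mk F (x.1 • v + u₁) (hκdef x)).rep ∈ W ∧
        hermEq q (Projectivization.mk F (x.1 • v + u₁) (hκdef x)).rep = 0 := by
      intro x
      obtain ⟨α, hα⟩ := Projectivization.exists_smul_eq_mk_rep F _ (hκdef x)
      have hvecW : x.1 • v + u₁ ∈ W := by
        rw [← hspanv]
        exact Submodule.mem_span_pair.mpr ⟨x.1, 1, by rw [one_smul]⟩
      have hvecH : hermEq q (x.1 • v + u₁) = 0 := by
        have hk := hkey x.1 1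
        rw [one_smul] at hk
        have hx : x.1 ^ q * x.1 = m := by rw [← pow_succ]; exact x.2
        rw [hk, hx, one_pow, mul_one, hm_def]
        field_simp
        ring
      constructor
      · rw [← hα]; exact Submodule.smul_mem _ _ hvecW
      · rw [← hα, Units.smul_def, herm_smul, hvecH, mul_zero]
    set κ : {x : F // x ^ (q + 1) = m} →
        {P : Projectivization F (Fin 3 → F) // P.rep ∈ W ∧ hermEq q P.rep = 0} :=
      fun x => ⟨Projectivization.mk F (x.1 • v + u₁) (hκdef x), hκmem x⟩ with hκ
    have hinj : Function.Injective κ := by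
      intro x y hxy
      have hmk : Projectivization.mk F (x.1 • v + u₁) (hκdef x)
          = Projectivization.mk F (y.1 • v + u₁) (hκdef y) := by
        have := congrArg Subtype.val hxy
        simpa [hκ] using this
      rw [Projectivization.mk_eq_mk_iff] at hmk
      obtain ⟨α, hα⟩ := hmk
      rw [Units.smul_def] at hα
      rw [smul_add, smul_smul] at hα
      have hz : ((α : F) * y.1 - x.1) • v + ((α : F) - 1) • u₁ = 0 := by
        have h2 : ((α : F) * y.1) • v + (α : F) • u₁ - (x.1 • v + u₁) = 0 := by
          rw [hα]; exact sub_self _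
        calc ((α : F) * y.1 - x.1) • v + ((α : F) - 1) • u₁
            = ((α : F) * y.1) • v + (α : F) • u₁ - (x.1 • v + u₁) := by module
          _ = 0 := h2
      obtain ⟨h3, h4⟩ := (lipair_iff v u₁).mp hliv _ _ hz
      have hα1 : (α : F) = 1 := by linear_combination h4
      apply Subtype.ext
      have : (1 : F) * y.1 - x.1 = 0 := by rw [← hα1]; exact h3
      linear_combination -this
    have hsurj : Function.Surjective κ := by
      rintro ⟨Q, hQW, hQH⟩
      rw [← hspanv] at hQW
      obtain ⟨s, t, hst⟩ := Submodule.mem_span_pair.mp hQW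
      have hk := hkey s t
      rw [hst, hQH] at hk
      have ht : t ≠ 0 := by
        intro h0
        rw [h0, zero_pow hq0, mul_zero, mul_zero, add_zero] at hk
        have hs0 : s = 0 := by
          rcases mul_eq_zero.mp hk.symm with h | h
          · exact absurd h hd0
          · rcases mul_eq_zero.mp h with h' | h'
            · exact (pow_eq_zero_iff hq0).mp h'
            · exact h'
        rw [h0, hs0, zero_smul, zero_smul, add_zero] at hst
        exact Q.rep_nonzero hst.symm
      have hxval : (s / t) ^ (q + 1) = m := by
        rw [div_pow, hm_def, div_eq_div_iff (pow_ne_zero _ ht) hd0]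
        linear_combination -hk
      refine ⟨⟨s / t, hxval⟩, ?_⟩
      apply Subtype.ext
      show Projectivization.mk F ((s / t) • v + u₁) _ = Q
      rw [← Projectivization.mk_rep Q, Projectivization.mk_eq_mk_iff']
      refine ⟨t⁻¹, ?_⟩
      rw [← hst]
      rw [smul_add, smul_smul, smul_smul, inv_mul_cancel₀ ht, one_smul]
      congr 1
      rw [div_eq_inv_mul]
    rw [← count_pow_eq q hq2 hF m hm0 hm1]
    exact (Nat.card_congr (Equiv.ofBijective κ ⟨hinj, hsurj⟩)).symm
end

section
/- Let d ≤ q−1 be a positive integer and 1 ≤ a ≤ d. The number of minimum-weight codewords of the dual Hermitian code C(d,a)^⊥ is A_δ = (q²−1)·q²·C(q, d+1), where δ = d+1 is the minimum distance and C(q, d+1) is a binomial coefficient. Equivalently, the supports of minimum-weight codewords are exactly the (d+1)-subsets of the q affine rational points on a non-tangent line through P_∞, there are q²·C(q,d+1) such supports, and each support carries exactly q²−1 minimum-weight codewords. -/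
/-- The affine rational points `B` of the Hermitian curve `y^q + y = x^(q+1)`. -/
abbrev hermB (F : Type) [Field F] (q : ℕ) : Type :=
  {P : F × F // P.2 ^ q + P.2 = P.1 ^ (q + 1)}

noncomputable instance (F : Type) [Field F] [Fintype F] (q : ℕ) : Fintype (hermB F q) :=
  Fintype.ofFinite _

/-- The Hermitian one-point code `C(d,a)`: the evaluation at the affine rational points
of the space of degree-`d` forms on `X` vanishing to order `a` at `P_∞`, spanned by the
monomials `x^i y^j` with `0 ≤ j ≤ q-1` and `iq + j(q+1) ≤ m`, `m = d(q+1) - a`. -/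
noncomputable def hermCode (F : Type) [Field F] (q d a : ℕ) :
    Submodule F (hermB F q → F) :=
  Submodule.span F {f | ∃ i j : ℕ, j ≤ q - 1 ∧ i * q + j * (q + 1) ≤ d * (q + 1) - a ∧
    f = fun P => P.1.1 ^ i * P.1.2 ^ j}

open Finset in
/-- The dual code of a linear code `C ⊆ F^ι`. -/
def dualCode {F : Type} [Field F] {ι : Type} [Fintype ι] (C : Submodule F (ι → F)) :
    Submodule F (ι → F) where
  carrier := {v | ∀ c ∈ C, ∑ i, v i * c i = 0}
  zero_mem' := by intro c hc; simp
  add_mem' := by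
    intro a b ha hb c hc
    have h : ∑ i, (a + b) i * c i = ∑ i, (a i * c i + b i * c i) := by
      apply Finset.sum_congr rfl; intro i _; simp [add_mul]
    rw [h, Finset.sum_add_distrib, ha c hc, hb c hc, add_zero]
  smul_mem' := by
    intro r a ha c hc
    have h : ∑ i, (r • a) i * c i = r * ∑ i, a i * c i := by
      rw [Finset.mul_sum]; apply Finset.sum_congr rfl; intro i _; simp [mul_assoc]
    rw [h, ha c hc, mul_zero]

/-- The Hamming weight of a word. -/
noncomputable def wt {F : Type} [Field F] {ι : Type} (w : ι → F) : ℕ :=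
  Nat.card {i : ι // w i ≠ 0}


open Finset Polynomial

section Aux
variable {F : Type} [Field F] {ι : Type} [Fintype ι]

theorem mem_dualCode {C : Submodule F (ι → F)} {w : ι → F} :
    w ∈ dualCode C ↔ ∀ c ∈ C, ∑ i, w i * c i = 0 := Iff.rfl

/-- pairing as a linear map -/
noncomputable def pairingL (w : ι → F) : (ι → F) →ₗ[F] F where
  toFun c := ∑ i, w i * c i
  map_add' a b := by
    simp only [Pi.add_apply, mul_add, Finset.sum_add_distrib]
  map_smul' r c := by
    simp only [Pi.smul_apply, smul_eq_mul, RingHom.id_apply, Finset.mul_sum]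
    exact Finset.sum_congr rfl fun i _ => by ring

theorem dualCode_span_iff {G : Set (ι → F)} {w : ι → F} :
    w ∈ dualCode (Submodule.span F G) ↔ ∀ g ∈ G, ∑ i, w i * g i = 0 := by
  constructor
  · exact fun h g hg => h g (Submodule.subset_span hg)
  · intro h c hc
    have hle : Submodule.span F G ≤ LinearMap.ker (pairingL w) :=
      Submodule.span_le.mpr (fun g hg => LinearMap.mem_ker.mpr (h g hg))
    exact LinearMap.mem_ker.mp (hle hc)

theorem wt_eq [DecidableEq F] (w : ι → F) :
    wt w = (Finset.univ.filter (fun i => w i ≠ 0)).card := by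
  rw [wt, Nat.card_eq_fintype_card]
  convert Fintype.card_subtype (fun i => w i ≠ 0)

end Aux

section Herm
variable {F : Type} [Field F] [Fintype F] {q d a : ℕ}

theorem prod_mem_hermCode {I J : ℕ} (hJq : J ≤ q - 1)
    (hIJ : I * q + J * (q + 1) ≤ d * (q + 1) - a) (pp qq : F[X])
    (hp : pp.natDegree ≤ I) (hq' : qq.natDegree ≤ J) :
    (fun P : hermB F q => pp.eval P.1.1 * qq.eval P.1.2) ∈ hermCode F q d a := by
  have hkey : (fun P : hermB F q => pp.eval P.1.1 * qq.eval P.1.2)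
      = ∑ i ∈ pp.support, ∑ j ∈ qq.support,
          (pp.coeff i * qq.coeff j) • (fun P : hermB F q => P.1.1 ^ i * P.1.2 ^ j) := by
    funext P
    simp only [Finset.sum_apply, Pi.smul_apply, smul_eq_mul]
    rw [Polynomial.eval_eq_sum, Polynomial.eval_eq_sum, Polynomial.sum_def,
      Polynomial.sum_def, Finset.sum_mul_sum]
    exact Finset.sum_congr rfl fun i _ => Finset.sum_congr rfl fun j _ => by ring
  rw [hkey]
  refine Submodule.sum_mem _ fun i hi => Submodule.sum_mem _ fun j hj => ?_
  refine Submodule.smul_mem _ _ (Submodule.subset_span ?_)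
  have hi' : i ≤ I := le_trans (Polynomial.le_natDegree_of_mem_supp i hi) hp
  have hj' : j ≤ J := le_trans (Polynomial.le_natDegree_of_mem_supp j hj) hq'
  exact ⟨i, j, le_trans hj' hJq,
    le_trans (Nat.add_le_add (Nat.mul_le_mul_right q hi') (Nat.mul_le_mul_right (q+1) hj')) hIJ,
    rfl⟩

theorem killed [DecidableEq F] {w : hermB F q → F}
    (hw : w ∈ dualCode (hermCode F q d a)) {S : Finset (hermB F q)}
    (hsupp : ∀ P, w P ≠ 0 → P ∈ S) (P0 : hermB F q)
    {I J : ℕ} (hJq : J ≤ q - 1) (hIJ : I * q + J * (q + 1) ≤ d * (q + 1) - a)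
    (hI : ((S.image (fun P => P.1.1)).erase P0.1.1).card ≤ I)
    (hJ : ((S.filter (fun P => P.1.1 = P0.1.1)).erase P0).card ≤ J) :
    w P0 = 0 := by
  set xs := (S.image (fun P : hermB F q => P.1.1)).erase P0.1.1 with hxs
  set ys := (S.filter (fun P => P.1.1 = P0.1.1)).erase P0 with hys
  set pp : F[X] := ∏ c ∈ xs, (X - C c) with hpp
  set qq : F[X] := ∏ P ∈ ys, (X - C P.1.2) with hqq
  have hdp : pp.natDegree ≤ I := by
    refine le_trans (Polynomial.natDegree_prod_le _ _) (le_trans ?_ hI)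
    simpa using Finset.sum_le_card_nsmul xs _ 1
      (fun c _ => le_of_eq (Polynomial.natDegree_X_sub_C c))
  have hdq : qq.natDegree ≤ J := by
    refine le_trans (Polynomial.natDegree_prod_le _ _) (le_trans ?_ hJ)
    simpa using Finset.sum_le_card_nsmul ys _ 1
      (fun P _ => le_of_eq (Polynomial.natDegree_X_sub_C _))
  have hmem := prod_mem_hermCode hJq hIJ pp qq hdp hdq
  have hzero := hw _ hmem
  have hred : ∑ P, w P * (pp.eval P.1.1 * qq.eval P.1.2)
      = w P0 * (pp.eval P0.1.1 * qq.eval P0.1.2) := by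
    refine Finset.sum_eq_single P0 ?_ ?_
    · intro P _ hPne
      by_cases hwP : w P = 0
      · rw [hwP, zero_mul]
      · have hPS := hsupp P hwP
        by_cases hx : P.1.1 = P0.1.1
        · have hPy : P ∈ ys := Finset.mem_erase.mpr ⟨hPne, Finset.mem_filter.mpr ⟨hPS, hx⟩⟩
          have : qq.eval P.1.2 = 0 := by
            rw [hqq, Polynomial.eval_prod]
            exact Finset.prod_eq_zero hPy (by simp)
          rw [this, mul_zero, mul_zero]
        · have hPx : P.1.1 ∈ xs :=
            Finset.mem_erase.mpr ⟨hx, Finset.mem_image.mpr ⟨P, hPS, rfl⟩⟩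
          have : pp.eval P.1.1 = 0 := by
            rw [hpp, Polynomial.eval_prod]
            exact Finset.prod_eq_zero hPx (by simp)
          rw [this, zero_mul, mul_zero]
    · intro h; exact absurd (Finset.mem_univ P0) h
  rw [hred] at hzero
  by_contra hw0
  have hppne : pp.eval P0.1.1 ≠ 0 := by
    rw [hpp, Polynomial.eval_prod]
    refine Finset.prod_ne_zero_iff.mpr fun c hc => ?_
    have := (Finset.mem_erase.mp hc).1
    simp only [Polynomial.eval_sub, Polynomial.eval_X, Polynomial.eval_C]
    exact sub_ne_zero.mpr (Ne.symm this)
  have hqqne : qq.eval P0.1.2 ≠ 0 := by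
    rw [hqq, Polynomial.eval_prod]
    refine Finset.prod_ne_zero_iff.mpr fun P hP => ?_
    obtain ⟨hPne, hPf⟩ := Finset.mem_erase.mp hP
    have hx : P.1.1 = P0.1.1 := (Finset.mem_filter.mp hPf).2
    simp only [Polynomial.eval_sub, Polynomial.eval_X, Polynomial.eval_C]
    intro hy
    exact hPne (Subtype.ext (Prod.ext hx (sub_eq_zero.mp hy).symm))
  exact (mul_ne_zero hw0 (mul_ne_zero hppne hqqne)) hzero


theorem M_arith {I J : ℕ} (h : I + J + 1 ≤ d) (ha1 : 1 ≤ a) (had : a ≤ d)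
    (hdq : d ≤ q - 1) (hq2 : 2 ≤ q) :
    J ≤ q - 1 ∧ I * q + J * (q + 1) ≤ d * (q + 1) - a := by
  refine ⟨by omega, ?_⟩
  have h1 : I * q + J * (q + 1) ≤ (I + J) * (q + 1) := by nlinarith
  have h2 : (I + J) * (q + 1) ≤ (d - 1) * (q + 1) :=
    Nat.mul_le_mul_right _ (by omega)
  have h3 : (d - 1) * (q + 1) ≤ d * (q + 1) - a := by
    rw [Nat.sub_one_mul]
    exact Nat.sub_le_sub_left (by omega) _
  omega

theorem M_arith0 {I : ℕ} (h : I ≤ d) (had : a ≤ d) :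
    I * q + 0 * (q + 1) ≤ d * (q + 1) - a := by
  have h1 : I * q ≤ d * q := Nat.mul_le_mul_right _ h
  have h2 : d * (q + 1) = d * q + d := by ring
  omega

theorem fiber_card_bound [DecidableEq F] (S : Finset (hermB F q)) (P0 : hermB F q)
    (hP0 : P0 ∈ S) (k : ℕ)
    (hk : ∀ c ∈ (S.image (fun P : hermB F q => P.1.1)).erase P0.1.1,
      k ≤ (S.filter (fun P => P.1.1 = c)).card) :
    (S.filter (fun P => P.1.1 = P0.1.1)).card
      + k * ((S.image (fun P : hermB F q => P.1.1)).erase P0.1.1).card ≤ S.card := by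
  have hx0 : P0.1.1 ∈ S.image (fun P : hermB F q => P.1.1) :=
    Finset.mem_image.mpr ⟨P0, hP0, rfl⟩
  rw [Finset.card_eq_sum_card_image (fun P : hermB F q => P.1.1) S,
    ← Finset.insert_erase hx0, Finset.sum_insert (Finset.notMem_erase _ _)]
  refine Nat.add_le_add_left ?_ _
  have := Finset.card_nsmul_le_sum _ _ k hk
  simpa [mul_comm] using this

/-- If the support has at most `d` points, a dual codeword is zero. -/
theorem dual_dist [DecidableEq F] (hq2 : 2 ≤ q) (hd0 : 0 < d) (hdq : d ≤ q - 1)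
    (ha1 : 1 ≤ a) (had : a ≤ d) {w : hermB F q → F}
    (hw : w ∈ dualCode (hermCode F q d a))
    (hwt : (Finset.univ.filter (fun P => w P ≠ 0)).card ≤ d) : w = 0 := by
  set S := Finset.univ.filter (fun P => w P ≠ 0) with hS
  have hsupp : ∀ P, w P ≠ 0 → P ∈ S := fun P h => Finset.mem_filter.mpr ⟨Finset.mem_univ P, h⟩
  funext P0
  show w P0 = 0
  by_cases hP0 : P0 ∈ S
  swap
  · by_contra h; exact hP0 (hsupp P0 h)
  · have hP0f : P0 ∈ S.filter (fun P => P.1.1 = P0.1.1) :=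
      Finset.mem_filter.mpr ⟨hP0, rfl⟩
    set n := (S.filter (fun P => P.1.1 = P0.1.1)).card with hn
    set r1 := ((S.image (fun P : hermB F q => P.1.1)).erase P0.1.1).card with hr1
    have hn1 : 1 ≤ n := Finset.card_pos.mpr ⟨P0, hP0f⟩
    have hbound : n + 1 * r1 ≤ S.card := by
      refine fiber_card_bound S P0 hP0 1 (fun c hc => ?_)
      obtain ⟨P, hPS, hPc⟩ := Finset.mem_image.mp (Finset.mem_erase.mp hc).2
      exact Finset.card_pos.mpr ⟨P, Finset.mem_filter.mpr ⟨hPS, hPc⟩⟩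
    have harith := M_arith (q := q) (d := d) (a := a) (I := r1) (J := n - 1)
      (by omega) ha1 had hdq hq2
    exact killed hw hsupp P0 harith.1 harith.2 (le_of_eq hr1.symm)
      (by rw [Finset.card_erase_of_mem hP0f])

/-- A weight-`d+1` dual codeword has all support points on one line `x = c`. -/
theorem supp_line [DecidableEq F] (hq2 : 2 ≤ q) (hd0 : 0 < d) (hdq : d ≤ q - 1)
    (ha1 : 1 ≤ a) (had : a ≤ d) {w : hermB F q → F}
    (hw : w ∈ dualCode (hermCode F q d a))
    (hwt : (Finset.univ.filter (fun P => w P ≠ 0)).card = d + 1) :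
    ∀ P1, w P1 ≠ 0 → ∀ P2, w P2 ≠ 0 → P1.1.1 = P2.1.1 := by
  set S := Finset.univ.filter (fun P => w P ≠ 0) with hS
  have hsupp : ∀ P, w P ≠ 0 → P ∈ S := fun P h => Finset.mem_filter.mpr ⟨Finset.mem_univ P, h⟩
  have hwne : ∀ P ∈ S, w P ≠ 0 := fun P h => (Finset.mem_filter.mp h).2
  by_contra hcon
  push_neg at hcon
  obtain ⟨P1, hw1, P2, hw2, hne⟩ := hcon
  have hP1 : P1 ∈ S := hsupp P1 hw1
  have hP2 : P2 ∈ S := hsupp P2 hw2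
  by_cases hA : ∃ P0 ∈ S, (S.filter (fun P => P.1.1 = P0.1.1)).card = 1
  · obtain ⟨P0, hP0, hone⟩ := hA
    have hP0f : P0 ∈ S.filter (fun P => P.1.1 = P0.1.1) :=
      Finset.mem_filter.mpr ⟨hP0, rfl⟩
    have hx0 : P0.1.1 ∈ S.image (fun P : hermB F q => P.1.1) :=
      Finset.mem_image.mpr ⟨P0, hP0, rfl⟩
    have hIle : ((S.image (fun P : hermB F q => P.1.1)).erase P0.1.1).card ≤ d := by
      rw [Finset.card_erase_of_mem hx0]
      have := Finset.card_image_le (s := S) (f := fun P : hermB F q => P.1.1)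
      omega
    have h0 := killed hw hsupp P0 (J := 0) (I := d) (by omega)
      (M_arith0 (le_refl d) had) hIle
      (by rw [Finset.card_erase_of_mem hP0f, hone])
    exact hwne P0 hP0 h0
  · push_neg at hA
    have hB : ∀ P0 ∈ S, 2 ≤ (S.filter (fun P => P.1.1 = P0.1.1)).card := by
      intro P0 hP0
      have h1 : 1 ≤ (S.filter (fun P => P.1.1 = P0.1.1)).card :=
        Finset.card_pos.mpr ⟨P0, Finset.mem_filter.mpr ⟨hP0, rfl⟩⟩
      have := hA P0 hP0
      omega
    have hP1f : P1 ∈ S.filter (fun P => P.1.1 = P1.1.1) :=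
      Finset.mem_filter.mpr ⟨hP1, rfl⟩
    set n := (S.filter (fun P => P.1.1 = P1.1.1)).card with hn
    set r1 := ((S.image (fun P : hermB F q => P.1.1)).erase P1.1.1).card with hr1
    have hr1pos : 1 ≤ r1 := by
      refine Finset.card_pos.mpr ⟨P2.1.1, Finset.mem_erase.mpr
        ⟨fun h => hne h.symm, Finset.mem_image.mpr ⟨P2, hP2, rfl⟩⟩⟩
    have hbound : n + 2 * r1 ≤ S.card := by
      refine fiber_card_bound S P1 hP1 2 (fun c hc => ?_)
      obtain ⟨P, hPS, hPc⟩ := Finset.mem_image.mp (Finset.mem_erase.mp hc).2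
      have := hB P hPS
      rw [hPc] at this
      exact this
    have hn1 : 1 ≤ n := Finset.card_pos.mpr ⟨P1, hP1f⟩
    rw [hwt] at hbound
    have harith := M_arith (q := q) (d := d) (a := a) (I := r1) (J := n - 1)
      (by omega) ha1 had hdq hq2
    exact hwne P1 hP1 (killed hw hsupp P1 harith.1 harith.2 (le_of_eq hr1.symm)
      (by rw [Finset.card_erase_of_mem hP1f]))

theorem sum_supp_line [DecidableEq F] {w : hermB F q → F} {c : F}
    (hsupp : ∀ P, w P ≠ 0 → P.1.1 = c) (i j : ℕ) :
    ∑ P, w P * (P.1.1 ^ i * P.1.2 ^ j) = c ^ i * ∑ P, w P * P.1.2 ^ j := by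
  rw [Finset.mul_sum]
  refine Finset.sum_congr rfl fun P _ => ?_
  by_cases h : w P = 0
  · rw [h]; ring
  · rw [hsupp P h]; ring

theorem line_dual_iff [DecidableEq F] (hq2 : 2 ≤ q) (hd0 : 0 < d) (hdq : d ≤ q - 1)
    (ha1 : 1 ≤ a) (had : a ≤ d) {w : hermB F q → F} {c : F}
    (hsupp : ∀ P, w P ≠ 0 → P.1.1 = c) :
    w ∈ dualCode (hermCode F q d a) ↔ ∀ j < d, ∑ P, w P * P.1.2 ^ j = 0 := by
  rw [hermCode, dualCode_span_iff]
  constructor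
  · intro h j hj
    have harith := M_arith (q := q) (d := d) (a := a) (I := 0) (J := j)
      (by omega) ha1 had hdq hq2
    have := h (fun P : hermB F q => P.1.1 ^ 0 * P.1.2 ^ j) ⟨0, j, harith.1, harith.2, rfl⟩
    simpa using this
  · rintro h g ⟨i, j, hjq, hij, rfl⟩
    have hjd : j < d := by
      by_contra hc
      push_neg at hc
      have h1 : d * (q + 1) ≤ j * (q + 1) := Nat.mul_le_mul_right _ hc
      have h2 : 1 ≤ d * (q + 1) := Nat.mul_pos hd0 (by omega)
      omega
    rw [sum_supp_line hsupp, h j hjd, mul_zero]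

theorem vand_unique [DecidableEq F] {w : hermB F q → F} {c : F}
    {S : Finset (hermB F q)} (hSc : ∀ P ∈ S, P.1.1 = c) (hScard : S.card ≤ d)
    (hsupp : ∀ P, w P ≠ 0 → P ∈ S)
    (hcon : ∀ j < d, ∑ P, w P * P.1.2 ^ j = 0) : w = 0 := by
  funext P0
  show w P0 = 0
  by_contra h0
  have hP0 : P0 ∈ S := hsupp P0 h0
  have hd1 : 1 ≤ d := le_trans (Finset.card_pos.mpr ⟨P0, hP0⟩) hScard
  set hh : F[X] := ∏ P ∈ S.erase P0, (X - C P.1.2) with hhh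
  have hdeg : hh.natDegree ≤ d - 1 := by
    refine le_trans (Polynomial.natDegree_prod_le _ _) ?_
    have h1 := Finset.card_nsmul_le_sum (S.erase P0) (fun P => (1:ℕ)) 1 (fun P _ => le_refl 1)
    have h1' := Finset.sum_le_card_nsmul (S.erase P0)
      (fun P : hermB F q => (X - C P.1.2).natDegree) 1
      (fun P _ => le_of_eq (Polynomial.natDegree_X_sub_C _))
    have h2 : (S.erase P0).card = S.card - 1 := Finset.card_erase_of_mem hP0
    simp only [smul_eq_mul, mul_one] at h1'
    omega
  have hA1 : ∑ P, w P * hh.eval P.1.2 = w P0 * hh.eval P0.1.2 := by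
    refine Finset.sum_eq_single P0 ?_ (fun h' => absurd (Finset.mem_univ P0) h')
    intro P _ hPne
    by_cases hwP : w P = 0
    · rw [hwP, zero_mul]
    · have hz : hh.eval P.1.2 = 0 := by
        rw [hhh, Polynomial.eval_prod]
        exact Finset.prod_eq_zero (Finset.mem_erase.mpr ⟨hPne, hsupp P hwP⟩) (by simp)
      rw [hz, mul_zero]
  have hA2 : ∑ P, w P * hh.eval P.1.2 = 0 := by
    have hexp : ∀ P : hermB F q, w P * hh.eval P.1.2
        = ∑ k ∈ Finset.range (hh.natDegree + 1), hh.coeff k * (w P * P.1.2 ^ k) := by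
      intro P
      rw [Polynomial.eval_eq_sum_range, Finset.mul_sum]
      exact Finset.sum_congr rfl fun k _ => by ring
    rw [Finset.sum_congr rfl (fun P _ => hexp P), Finset.sum_comm]
    refine Finset.sum_eq_zero fun k hk => ?_
    rw [← Finset.mul_sum, hcon k (by have := Finset.mem_range.mp hk; omega), mul_zero]
  rw [hA1] at hA2
  have hne : hh.eval P0.1.2 ≠ 0 := by
    rw [hhh, Polynomial.eval_prod]
    refine Finset.prod_ne_zero_iff.mpr fun P hP => ?_
    obtain ⟨hPne, hPS⟩ := Finset.mem_erase.mp hP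
    simp only [Polynomial.eval_sub, Polynomial.eval_X, Polynomial.eval_C]
    intro hy
    exact hPne (Subtype.ext (Prod.ext ((hSc P hPS).trans (hSc P0 hP0).symm)
      (sub_eq_zero.mp hy).symm))
  rcases mul_eq_zero.mp hA2 with hz | hz
  · exact h0 hz
  · exact hne hz

theorem exists_w0 [DecidableEq F] {c : F} {S : Finset (hermB F q)}
    (hSc : ∀ P ∈ S, P.1.1 = c) (hScard : S.card = d + 1) :
    ∃ w0 : hermB F q → F, (∀ P, w0 P ≠ 0 → P ∈ S) ∧
      (∀ j < d, ∑ P, w0 P * P.1.2 ^ j = 0) ∧ (∀ P ∈ S, w0 P ≠ 0) := by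
  obtain ⟨v, hvne, hvcon⟩ : ∃ v : (S → F), v ≠ 0 ∧
      ∀ j < d, ∑ P : S, v P * (P : hermB F q).1.2 ^ j = 0 := by
    set φ : (S → F) →ₗ[F] (Fin d → F) :=
      { toFun := fun v j => ∑ P : S, v P * (P : hermB F q).1.2 ^ (j : ℕ)
        map_add' := by
          intro u v; funext j
          simp [add_mul, Finset.sum_add_distrib]
        map_smul' := by
          intro r v; funext j
          simp only [Pi.smul_apply, smul_eq_mul, RingHom.id_apply, Finset.mul_sum]
          exact Finset.sum_congr rfl fun P _ => by ring } with hφ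
    have hni : ¬ Function.Injective φ := by
      intro hinj
      have hle := LinearMap.finrank_le_finrank_of_injective hinj
      rw [Module.finrank_pi, Module.finrank_pi, Fintype.card_coe, Fintype.card_fin,
        hScard] at hle
      omega
    rw [Function.not_injective_iff] at hni
    obtain ⟨u, v, huv, hne⟩ := hni
    refine ⟨u - v, sub_ne_zero.mpr hne, fun j hj => ?_⟩
    have h0 : φ (u - v) = 0 := by rw [map_sub, huv, sub_self]
    have := congrFun h0 ⟨j, hj⟩
    simpa [hφ, sub_mul, Finset.sum_sub_distrib] using this
  classical
  set w0 : hermB F q → F := fun P => if h : P ∈ S then v ⟨P, h⟩ else 0 with hw0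
  have hw0supp : ∀ P, w0 P ≠ 0 → P ∈ S := by
    intro P h
    by_contra hns
    exact h (by simp [hw0, hns])
  have hw0con : ∀ j < d, ∑ P, w0 P * P.1.2 ^ j = 0 := by
    intro j hj
    have hres : ∑ P, w0 P * P.1.2 ^ j = ∑ P ∈ S, w0 P * P.1.2 ^ j :=
      (Finset.sum_subset (Finset.subset_univ S) (fun P _ hns => by
        simp [hw0, hns])).symm
    rw [hres, ← Finset.sum_coe_sort S (fun P => w0 P * P.1.2 ^ j)]
    rw [← hvcon j hj]
    refine Finset.sum_congr rfl fun P _ => ?_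
    simp [hw0, P.2]
  refine ⟨w0, hw0supp, hw0con, ?_⟩
  intro P1 hP1
  by_contra h1

  have hzz : w0 = 0 := by
    refine vand_unique (c := c) (S := S.erase P1) (d := d)
      (fun P hP => hSc P (Finset.mem_erase.mp hP).2)
      (by rw [Finset.card_erase_of_mem hP1, hScard]; omega) ?_ hw0con
    intro P h
    refine Finset.mem_erase.mpr ⟨?_, hw0supp P h⟩
    rintro rfl
    exact h h1
  obtain ⟨Pv, hPv⟩ := Function.ne_iff.mp hvne
  have h2 : w0 Pv = v Pv := by simp [hw0, Pv.2]
  rw [hzz] at h2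
  exact hPv (by simpa using h2.symm)

end Herm


section Field
variable {F : Type} [Field F] [Fintype F]

theorem card_rootset_le [DecidableEq F] (f : Polynomial F) (hf : f ≠ 0) :
    (Finset.univ.filter (fun y : F => f.eval y = 0)).card ≤ f.natDegree := by
  have hsub : Finset.univ.filter (fun y : F => f.eval y = 0) ⊆ f.roots.toFinset := by
    intro y hy
    rw [Multiset.mem_toFinset, Polynomial.mem_roots hf]
    exact (Finset.mem_filter.mp hy).2
  exact le_trans (Finset.card_le_card hsub)
    (le_trans (Multiset.toFinset_card_le _) (Polynomial.card_roots' f))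

theorem card_fiber [DecidableEq F] {q : ℕ} (p e : ℕ) (hp : p.Prime) (hqpe : q = p ^ e)
    (he : 0 < e) [CharP F p] (hF : Fintype.card F = q ^ 2) (c : F) :
    (Finset.univ.filter (fun P : hermB F q => P.1.1 = c)).card = q := by
  classical
  haveI : Fact p.Prime := ⟨hp⟩
  have hq2 : 2 ≤ q := by
    rw [hqpe]
    calc 2 ≤ p := hp.two_le
      _ ≤ p ^ e := Nat.le_self_pow he.ne' p
  have frob : ∀ x y : F, (x + y) ^ q = x ^ q + y ^ q := by
    intro x y; rw [hqpe]; exact add_pow_char_pow x y p e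
  have frobsub : ∀ x y : F, (x - y) ^ q = x ^ q - y ^ q := by
    intro x y; rw [hqpe]; exact sub_pow_char_pow x y e
  have hpowcard : ∀ x : F, (x ^ q) ^ q = x := by
    intro x
    rw [← pow_mul]
    have hqq : q * q = Fintype.card F := by rw [hF]; ring
    rw [hqq, FiniteField.pow_card]
  obtain ⟨L, hLdef⟩ : ∃ L : F →+ F, ∀ y, L y = y ^ q + y := by
    refine ⟨AddMonoidHom.mk' (fun y => y ^ q + y) ?_, fun y => rfl⟩
    intro x y
    rw [frob]
    ring
  have hkey : ∀ y : F, (L y) ^ q = L y := by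
    intro y
    rw [hLdef, frob, hpowcard]
    ring
  set Kset := Finset.univ.filter (fun y : F => y ^ q + y = 0) with hKset
  set Iset := Finset.univ.filter (fun z : F => z ^ q = z) with hIset
  have hKle : Kset.card ≤ q := by
    have h1 : (Polynomial.X ^ q + Polynomial.X : Polynomial F) ≠ 0 := by
      intro h
      have h2 := congrArg (fun f => Polynomial.coeff f 1) h
      simp only [Polynomial.coeff_add, Polynomial.coeff_X_pow, Polynomial.coeff_X_one,
        Polynomial.coeff_zero] at h2
      rw [if_neg (by omega : ¬ (1:ℕ) = q)] at h2
      simp at h2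
    have heq : Kset = Finset.univ.filter
        (fun y : F => (Polynomial.X ^ q + Polynomial.X : Polynomial F).eval y = 0) := by
      apply Finset.filter_congr; intro y _; simp
    rw [heq]
    refine le_trans (card_rootset_le _ h1) ?_
    refine le_trans (Polynomial.natDegree_add_le _ _) ?_
    simp only [Polynomial.natDegree_X_pow, Polynomial.natDegree_X]
    omega
  have hIle : Iset.card ≤ q := by
    have h1 : (Polynomial.X ^ q - Polynomial.X : Polynomial F) ≠ 0 := by
      intro h
      have h2 := congrArg (fun f => Polynomial.coeff f 1) h
      simp only [Polynomial.coeff_sub, Polynomial.coeff_X_pow, Polynomial.coeff_X_one,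
        Polynomial.coeff_zero] at h2
      rw [if_neg (by omega : ¬ (1:ℕ) = q)] at h2
      simp at h2
    have heq : Iset = Finset.univ.filter
        (fun y : F => (Polynomial.X ^ q - Polynomial.X : Polynomial F).eval y = 0) := by
      apply Finset.filter_congr; intro y _; simp [sub_eq_zero]
    rw [heq]
    refine le_trans (card_rootset_le _ h1) ?_
    refine le_trans (Polynomial.natDegree_sub_le _ _) ?_
    simp only [Polynomial.natDegree_X_pow, Polynomial.natDegree_X]
    omega
  have hker_card : Nat.card L.ker = Kset.card := by
    have h1 : (L.ker : Set F) = ↑Kset := by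
      ext y
      simp [hKset, AddMonoidHom.mem_ker, hLdef]
    calc Nat.card L.ker = (L.ker : Set F).ncard := Nat.card_coe_set_eq _
      _ = (↑Kset : Set F).ncard := by rw [h1]
      _ = Kset.card := Set.ncard_coe_finset Kset
  set RF := Finset.univ.filter (fun z : F => z ∈ L.range) with hRF
  have hrange_card : Nat.card L.range = RF.card := by
    have h1 : (L.range : Set F) = ↑RF := by
      ext z
      simp [hRF]
    calc Nat.card L.range = (L.range : Set F).ncard := Nat.card_coe_set_eq _
      _ = (↑RF : Set F).ncard := by rw [h1]
      _ = RF.card := Set.ncard_coe_finset RF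
  have hRsub : RF ⊆ Iset := by
    intro z hz
    obtain ⟨y, hy⟩ := AddMonoidHom.mem_range.mp (Finset.mem_filter.mp hz).2
    refine Finset.mem_filter.mpr ⟨Finset.mem_univ z, ?_⟩
    rw [← hy]; exact hkey y
  have hmul : Nat.card L.range * Nat.card L.ker = q * q := by
    have h1 := AddSubgroup.card_eq_card_quotient_mul_card_addSubgroup L.ker
    have h2 : Nat.card (F ⧸ L.ker) = Nat.card L.range :=
      Nat.card_congr (QuotientAddGroup.quotientKerEquivRange L).toEquiv
    rw [h2] at h1
    rw [← h1, Nat.card_eq_fintype_card, hF]; ring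
  have hq0 : 0 < q := by omega
  have hRle : Nat.card L.range ≤ q := by
    rw [hrange_card]; exact le_trans (Finset.card_le_card hRsub) hIle
  have hKle' : Nat.card L.ker ≤ q := by rw [hker_card]; exact hKle
  have hRq : Nat.card L.range = q := by
    have h1 : q * q ≤ Nat.card L.range * q :=
      le_trans (le_of_eq hmul.symm) (Nat.mul_le_mul_left _ hKle')
    have h2 : q ≤ Nat.card L.range := Nat.le_of_mul_le_mul_right h1 hq0
    omega
  have hKq : Nat.card L.ker = q := by
    have h1 : q * q ≤ q * Nat.card L.ker := by
      calc q * q = Nat.card L.range * Nat.card L.ker := hmul.symm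
        _ ≤ q * Nat.card L.ker := Nat.mul_le_mul_right _ hRle
    have h2 : q ≤ Nat.card L.ker := Nat.le_of_mul_le_mul_left h1 hq0
    omega
  have hReq : RF = Iset := by
    refine Finset.eq_of_subset_of_card_le hRsub ?_
    rw [← hrange_card, hRq]; exact hIle
  have hcI : c ^ (q + 1) ∈ Iset := by
    refine Finset.mem_filter.mpr ⟨Finset.mem_univ _, ?_⟩
    calc (c ^ (q + 1)) ^ q = c ^ (q * q) * c ^ q := by
          rw [← pow_mul, ← pow_add]; ring_nf
      _ = (c ^ q) ^ q * c ^ q := by rw [pow_mul]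
      _ = c * c ^ q := by rw [hpowcard]
      _ = c ^ (q + 1) := by ring
  obtain ⟨y0, hy0⟩ : ∃ y0, L y0 = c ^ (q + 1) := by
    rw [← hReq] at hcI
    exact AddMonoidHom.mem_range.mp (Finset.mem_filter.mp hcI).2
  have hy0' : y0 ^ q + y0 = c ^ (q + 1) := by rw [← hLdef]; exact hy0
  set Tset := Finset.univ.filter (fun y : F => y ^ q + y = c ^ (q + 1)) with hTset
  have hTK : Tset.card = Kset.card := by
    refine Finset.card_bij' (fun y _ => y - y0) (fun y _ => y + y0) ?_ ?_ ?_ ?_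
    · intro y hy
      have h1 := (Finset.mem_filter.mp hy).2
      refine Finset.mem_filter.mpr ⟨Finset.mem_univ _, ?_⟩
      rw [frobsub]
      calc y ^ q - y0 ^ q + (y - y0) = (y ^ q + y) - (y0 ^ q + y0) := by ring
        _ = 0 := by rw [h1, hy0']; ring
    · intro y hy
      have h1 := (Finset.mem_filter.mp hy).2
      refine Finset.mem_filter.mpr ⟨Finset.mem_univ _, ?_⟩
      rw [frob]
      calc y ^ q + y0 ^ q + (y + y0) = (y ^ q + y) + (y0 ^ q + y0) := by ring
        _ = c ^ (q + 1) := by rw [h1, hy0']; ring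
    · intro y _; ring
    · intro y _; ring
  have hfib : (Finset.univ.filter (fun P : hermB F q => P.1.1 = c)).card = Tset.card := by
    refine Finset.card_bij' (fun P _ => P.1.2)
      (fun y hy => ⟨(c, y), (Finset.mem_filter.mp hy).2⟩) ?_ ?_ ?_ ?_
    · intro P hP
      have h1 := (Finset.mem_filter.mp hP).2
      refine Finset.mem_filter.mpr ⟨Finset.mem_univ _, ?_⟩
      have h2 := P.2
      rw [h1] at h2
      exact h2
    · intro y hy; exact Finset.mem_filter.mpr ⟨Finset.mem_univ _, rfl⟩
    · intro P hP
      have h1 := (Finset.mem_filter.mp hP).2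
      exact Subtype.ext (Prod.ext h1.symm rfl)
    · intro y _; rfl
  rw [hfib, hTK, ← hker_card, hKq]

end Field



/-- For `0 < d ≤ q-1` and `1 ≤ a ≤ d`, the minimum distance of `C(d,a)^⊥` is `d+1`
and the number of its minimum-weight codewords is `(q²-1)·q²·binom(q, d+1)`. -/
theorem herm_dual_min_weight_count (p e q d a : ℕ) (hp : p.Prime) (hq : q = p ^ e)
    (he : 0 < e) (F : Type) [Field F] [Fintype F] [CharP F p] (hF : Fintype.card F = q ^ 2)
    (hd0 : 0 < d) (hd : d ≤ q - 1) (ha1 : 1 ≤ a) (had : a ≤ d) :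
    (∀ w ∈ dualCode (hermCode F q d a), w ≠ 0 → d + 1 ≤ wt w) ∧
    Set.ncard {w : hermB F q → F | w ∈ dualCode (hermCode F q d a) ∧ wt w = d + 1}
      = (q ^ 2 - 1) * (q ^ 2 * Nat.choose q (d + 1)) := by
  classical
  have hq2 : 2 ≤ q := by
    rw [hq]
    calc 2 ≤ p := hp.two_le
      _ ≤ p ^ e := Nat.le_self_pow he.ne' p
  have part1 : ∀ w ∈ dualCode (hermCode F q d a), w ≠ 0 → d + 1 ≤ wt w := by
    intro w hw hne
    rw [wt_eq]
    by_contra hlt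
    push_neg at hlt
    exact hne (dual_dist hq2 hd0 hd ha1 had hw (by omega))
  refine ⟨part1, ?_⟩
  set T : Finset (Finset (hermB F q)) :=
    Finset.univ.biUnion (fun c : F =>
      Finset.powersetCard (d+1) (Finset.univ.filter (fun P : hermB F q => P.1.1 = c))) with hT
  set MinSet : Finset (hermB F q → F) :=
    Finset.univ.filter (fun w => w ∈ dualCode (hermCode F q d a) ∧ wt w = d + 1) with hMin
  have hset : {w : hermB F q → F | w ∈ dualCode (hermCode F q d a) ∧ wt w = d + 1}
      = ↑MinSet := by
    ext w
    simp [hMin]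
  rw [hset, Set.ncard_coe_finset]
  have hTcard : T.card = q ^ 2 * Nat.choose q (d + 1) := by
    have hdisj : ∀ c1 ∈ (Finset.univ : Finset F), ∀ c2 ∈ (Finset.univ : Finset F), c1 ≠ c2 →
        Disjoint (Finset.powersetCard (d+1) (Finset.univ.filter (fun P : hermB F q => P.1.1 = c1)))
          (Finset.powersetCard (d+1) (Finset.univ.filter (fun P : hermB F q => P.1.1 = c2))) := by
      intro c1 _ c2 _ hne
      rw [Finset.disjoint_left]
      intro S1 h1 h2
      rw [Finset.mem_powersetCard] at h1 h2
      obtain ⟨P, hP⟩ := Finset.card_pos.mp (show 0 < S1.card by rw [h1.2]; omega)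
      have e1 := (Finset.mem_filter.mp (h1.1 hP)).2
      have e2 := (Finset.mem_filter.mp (h2.1 hP)).2
      exact hne (e1.symm.trans e2)
    rw [hT, Finset.card_biUnion hdisj]
    have hcc : ∀ c : F,
        (Finset.powersetCard (d+1) (Finset.univ.filter (fun P : hermB F q => P.1.1 = c))).card
          = Nat.choose q (d+1) := by
      intro c
      rw [Finset.card_powersetCard, card_fiber p e hp hq he hF c]
    rw [Finset.sum_congr rfl (fun c _ => hcc c), Finset.sum_const, smul_eq_mul,
      Finset.card_univ, hF]
  have hmap : ∀ w ∈ MinSet, Finset.univ.filter (fun P => w P ≠ 0) ∈ T := by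
    intro w hw
    obtain ⟨-, hdual, hwt⟩ := Finset.mem_filter.mp hw
    have hcard : (Finset.univ.filter (fun P => w P ≠ 0)).card = d + 1 := by
      rw [← wt_eq]; exact hwt
    have hline := supp_line hq2 hd0 hd ha1 had hdual hcard
    obtain ⟨P1, hP1⟩ := Finset.card_pos.mp (show 0 < (Finset.univ.filter (fun P => w P ≠ 0)).card
      by rw [hcard]; omega)
    have hx1 : w P1 ≠ 0 := (Finset.mem_filter.mp hP1).2
    refine Finset.mem_biUnion.mpr ⟨P1.1.1, Finset.mem_univ _,
      Finset.mem_powersetCard.mpr ⟨?_, hcard⟩⟩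
    intro P hP
    have hxP : w P ≠ 0 := (Finset.mem_filter.mp hP).2
    exact Finset.mem_filter.mpr ⟨Finset.mem_univ _, hline P hxP P1 hx1⟩
  rw [Finset.card_eq_sum_card_fiberwise hmap]
  have hfibcard : ∀ S1 ∈ T,
      (MinSet.filter (fun w => Finset.univ.filter (fun P => w P ≠ 0) = S1)).card = q ^ 2 - 1 := by
    intro S1 hS1
    obtain ⟨c, -, hSc'⟩ := Finset.mem_biUnion.mp hS1
    rw [Finset.mem_powersetCard] at hSc'
    obtain ⟨hsub, hcard⟩ := hSc'
    have hSc : ∀ P ∈ S1, P.1.1 = c := fun P hP => (Finset.mem_filter.mp (hsub hP)).2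
    obtain ⟨w0, hw0supp, hw0con, hw0full⟩ := exists_w0 hSc hcard
    obtain ⟨P0, hP0⟩ := Finset.card_pos.mp (show 0 < S1.card by omega)
    have hw0P0 : w0 P0 ≠ 0 := hw0full P0 hP0
    have hw0dual : w0 ∈ dualCode (hermCode F q d a) :=
      (line_dual_iff hq2 hd0 hd ha1 had (fun P h => hSc P (hw0supp P h))).mpr hw0con
    have hw0suppeq : Finset.univ.filter (fun P => w0 P ≠ 0) = S1 := by
      ext P
      simp only [Finset.mem_filter, Finset.mem_univ, true_and]
      exact ⟨fun h => hw0supp P h, fun h => hw0full P h⟩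
    have huniq : ∀ w : hermB F q → F, w ∈ dualCode (hermCode F q d a) →
        Finset.univ.filter (fun P => w P ≠ 0) = S1 →
        w = (w P0 * (w0 P0)⁻¹) • w0 := by
      intro w hwdual hwsupp
      have hWsupp : ∀ P, w P ≠ 0 → P ∈ S1 := by
        intro P h
        rw [← hwsupp]
        exact Finset.mem_filter.mpr ⟨Finset.mem_univ _, h⟩
      have hwline : ∀ P, w P ≠ 0 → P.1.1 = c := fun P h => hSc P (hWsupp P h)
      have hwcon := (line_dual_iff hq2 hd0 hd ha1 had hwline).mp hwdual
      set u : hermB F q → F := w - (w P0 * (w0 P0)⁻¹) • w0 with hu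
      have husupp : ∀ P, u P ≠ 0 → P ∈ S1.erase P0 := by
        intro P h
        rcases eq_or_ne P P0 with rfl | hne'
        · exfalso
          apply h
          simp only [hu, Pi.sub_apply, Pi.smul_apply, smul_eq_mul]
          rw [mul_assoc, inv_mul_cancel₀ hw0P0, mul_one, sub_self]
        · refine Finset.mem_erase.mpr ⟨hne', ?_⟩
          by_contra hns
          apply h
          have h1 : w P = 0 := by
            by_contra h2; exact hns (hWsupp P h2)
          have h2 : w0 P = 0 := by
            by_contra h2; exact hns (hw0supp P h2)
          simp [hu, h1, h2]
      have hucon : ∀ j < d, ∑ P, u P * P.1.2 ^ j = 0 := by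
        intro j hj
        have hexp : ∀ P : hermB F q, u P * P.1.2 ^ j
            = w P * P.1.2 ^ j - (w P0 * (w0 P0)⁻¹) * (w0 P * P.1.2 ^ j) := by
          intro P
          simp only [hu, Pi.sub_apply, Pi.smul_apply, smul_eq_mul]
          ring
        rw [Finset.sum_congr rfl (fun P _ => hexp P), Finset.sum_sub_distrib, ← Finset.mul_sum,
          hwcon j hj, hw0con j hj, mul_zero, sub_zero]
      have hz : u = 0 := vand_unique (c := c)
        (fun P hP => hSc P (Finset.mem_erase.mp hP).2)
        (by rw [Finset.card_erase_of_mem hP0, hcard]; omega) husupp hucon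
      rw [hu] at hz
      exact sub_eq_zero.mp hz
    have hcount : (MinSet.filter (fun w => Finset.univ.filter (fun P => w P ≠ 0) = S1)).card
        = (Finset.univ.filter (fun t : F => t ≠ 0)).card := by
      refine Finset.card_bij' (fun w _ => w P0)
        (fun t _ => (t * (w0 P0)⁻¹) • w0) ?_ ?_ ?_ ?_
      · intro w hw
        have h1 := (Finset.mem_filter.mp hw).2
        refine Finset.mem_filter.mpr ⟨Finset.mem_univ _, ?_⟩
        have hmem : P0 ∈ Finset.univ.filter (fun P => w P ≠ 0) := by rw [h1]; exact hP0
        exact (Finset.mem_filter.mp hmem).2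
      · intro t ht
        have htne : t ≠ 0 := (Finset.mem_filter.mp ht).2
        have hs : t * (w0 P0)⁻¹ ≠ 0 := mul_ne_zero htne (inv_ne_zero hw0P0)
        have hsupps : Finset.univ.filter (fun P => ((t * (w0 P0)⁻¹) • w0) P ≠ 0) = S1 := by
          rw [← hw0suppeq]
          apply Finset.filter_congr
          intro P _
          simp only [Pi.smul_apply, smul_eq_mul]
          constructor
          · intro h h2
            exact h (by rw [h2, mul_zero])
          · exact fun h => mul_ne_zero hs h
        refine Finset.mem_filter.mpr ⟨Finset.mem_filter.mpr ⟨Finset.mem_univ _, ?_, ?_⟩, hsupps⟩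
        · exact Submodule.smul_mem _ _ hw0dual
        · rw [wt_eq, hsupps, hcard]
      · intro w hw
        obtain ⟨hw1, hw2⟩ := Finset.mem_filter.mp hw
        obtain ⟨-, hdual, -⟩ := Finset.mem_filter.mp hw1
        exact (huniq w hdual hw2).symm
      · intro t ht
        simp only [Pi.smul_apply, smul_eq_mul]
        rw [mul_assoc, inv_mul_cancel₀ hw0P0, mul_one]
    rw [hcount, Finset.filter_ne', Finset.card_erase_of_mem (Finset.mem_univ 0),
      Finset.card_univ, hF]
  rw [Finset.sum_congr rfl hfibcard, Finset.sum_const, smul_eq_mul, hTcard]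
  exact Nat.mul_comm _ _
end

section
/- Let q be odd. The number of smooth conics in P^2 over F_{q^2} passing through P_∞ and tangent to the Hermitian curve X at P_∞ that meet X in exactly 2q affine F_{q^2}-rational points is q²(q+1)(q−1)/2; equivalently, the number of triples (a,b,c) ∈ F_{q^2}³ with a ≠ 0 such that the system y = ax² + bx + c, y^q + y = x^{q+1} has exactly 2q solutions (x,y) ∈ F_{q^2}² is q²(q+1)(q−1)/2. -/
set_option linter.unusedSectionVars false
open Finset

namespace ParabolaAux

structure Setup (q : ℕ) (F : Type) [Field F] [Fintype F] : Prop where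
  hq3 : 3 ≤ q
  hodd : Odd q
  hF : Fintype.card F = q ^ 2
  frob_add : ∀ x y : F, (x + y) ^ q = x ^ q + y ^ q
  two_ne : (2 : F) ≠ 0
  qzero : (q : F) = 0

variable {q : ℕ} {F : Type} [Field F] [Fintype F] [DecidableEq F]

namespace Setup
variable (S : Setup q F)
include S

lemma hq0 : 0 < q := by have := S.hq3; omega

lemma pow_pow (x : F) : (x ^ q) ^ q = x := by
  rw [← pow_mul]
  have h : q * q = Fintype.card F := by rw [S.hF]; ring
  rw [h, FiniteField.pow_card]

lemma frob_neg (x : F) : (-x) ^ q = -x ^ q := S.hodd.neg_pow x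

lemma frob_sub (x y : F) : (x - y) ^ q = x ^ q - y ^ q := by
  rw [sub_eq_add_neg, S.frob_add, S.frob_neg, sub_eq_add_neg]

lemma frob_two : (2 : F) ^ q = 2 := by
  have h := S.frob_add 1 1
  rw [one_pow] at h
  norm_num at h
  exact h

lemma frob_four : (4 : F) ^ q = 4 := by
  have h : (4 : F) = 2 * 2 := by norm_num
  rw [h, mul_pow, S.frob_two]

lemma four_ne : (4 : F) ≠ 0 := by
  have h : (4 : F) = 2 * 2 := by norm_num
  rw [h]; exact mul_ne_zero S.two_ne S.two_ne

lemma pow_q_sub_one_mul (x : F) : x ^ (q - 1) * x = x ^ q := by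
  rw [← pow_succ]
  congr 1
  have := S.hq3; omega

/-- number of solutions to `x ^ m = y` is at most `m`. -/
lemma pow_fiber_le (m : ℕ) (hm : 0 < m) (y : F) :
    (univ.filter fun x : F => x ^ m = y).card ≤ m := by
  classical
  have hsub : (univ.filter fun x : F => x ^ m = y) ⊆ (Polynomial.nthRoots m y).toFinset := by
    intro x hx
    simp only [mem_filter, mem_univ, true_and] at hx
    rw [Multiset.mem_toFinset, Polynomial.mem_nthRoots hm]
    exact hx
  calc (univ.filter fun x : F => x ^ m = y).card
      ≤ (Polynomial.nthRoots m y).toFinset.card := Finset.card_le_card hsub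
    _ ≤ Multiset.card (Polynomial.nthRoots m y) := Multiset.toFinset_card_le _
    _ ≤ m := Polynomial.card_nthRoots m y

lemma pow_count (m t : ℕ) (hm : 0 < m) (ht : 0 < t) (hmt : m * t = q ^ 2 - 1) :
    (univ.filter fun y : F => y ^ t = 1).card = t ∧
    ∀ y : F, y ^ t = 1 → (univ.filter fun x : F => x ^ m = y).card = m := by
  classical
  have hcard : (univ.filter fun x : F => x ^ (m * t) = 1).card = m * t := by
    have hset : (univ.filter fun x : F => x ^ (m * t) = 1) = univ.filter fun x : F => x ≠ 0 := by
      ext x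
      simp only [mem_filter, mem_univ, true_and]
      constructor
      · intro h hx
        rw [hx, zero_pow (by positivity)] at h
        exact one_ne_zero h.symm
      · intro hx
        have := FiniteField.pow_card_sub_one_eq_one x hx
        rwa [S.hF, ← hmt] at this
    rw [hset, filter_ne', card_erase_of_mem (mem_univ 0), card_univ, S.hF, hmt]
  -- map x ↦ x^m sends the solution set of x^(mt)=1 onto t-th roots of 1
  set XN := univ.filter fun x : F => x ^ (m * t) = 1 with hXN
  set Yt := univ.filter fun y : F => y ^ t = 1 with hYt
  have hmap : ∀ x ∈ XN, x ^ m ∈ Yt := by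
    intro x hx
    simp only [hXN, mem_filter, mem_univ, true_and] at hx
    simp only [hYt, mem_filter, mem_univ, true_and]
    rw [← pow_mul]; exact hx
  have hdecomp := Finset.card_eq_sum_card_fiberwise hmap
  have hfib_eq : ∀ y ∈ Yt, (XN.filter fun x => x ^ m = y)
      = univ.filter fun x : F => x ^ m = y := by
    intro y hy
    simp only [hYt, mem_filter, mem_univ, true_and] at hy
    ext x
    simp only [hXN, mem_filter, mem_univ, true_and]
    constructor
    · rintro ⟨-, h⟩; exact h
    · intro h
      refine ⟨?_, h⟩
      rw [pow_mul, h, hy]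
  have hfib_le : ∀ y ∈ Yt, (XN.filter fun x => x ^ m = y).card ≤ m := by
    intro y hy
    rw [hfib_eq y hy]
    exact S.pow_fiber_le m hm y
  have hYt_le : Yt.card ≤ t := S.pow_fiber_le t ht 1
  have hsum_le : ∑ y ∈ Yt, (XN.filter fun x => x ^ m = y).card ≤ Yt.card * m := by
    calc ∑ y ∈ Yt, (XN.filter fun x => x ^ m = y).card ≤ ∑ _y ∈ Yt, m :=
      Finset.sum_le_sum hfib_le
    _ = Yt.card * m := by rw [Finset.sum_const, smul_eq_mul]
  have hmt' : XN.card = m * t := hcard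
  have hYt_card : Yt.card = t := by
    by_contra hne
    have h1 : Yt.card < t := lt_of_le_of_ne hYt_le hne
    have : XN.card < m * t := by
      calc XN.card = ∑ y ∈ Yt, (XN.filter fun x => x ^ m = y).card := hdecomp
        _ ≤ Yt.card * m := hsum_le
        _ < t * m := by exact Nat.mul_lt_mul_of_lt_of_le h1 (le_refl m) hm
        _ = m * t := Nat.mul_comm t m
    omega
  have hfib_all : ∀ y ∈ Yt, (XN.filter fun x => x ^ m = y).card = m := by
    by_contra hne
    push_neg at hne
    obtain ⟨y0, hy0, hy0ne⟩ := hne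
    have hy0lt : (XN.filter fun x => x ^ m = y0).card < m :=
      lt_of_le_of_ne (hfib_le y0 hy0) hy0ne
    have : XN.card < m * t := by
      calc XN.card = ∑ y ∈ Yt, (XN.filter fun x => x ^ m = y).card := hdecomp
        _ < ∑ _y ∈ Yt, m := Finset.sum_lt_sum (fun i hi => hfib_le i hi) ⟨y0, hy0, hy0lt⟩
        _ = Yt.card * m := by rw [Finset.sum_const, smul_eq_mul]
        _ = t * m := by rw [hYt_card]
        _ = m * t := Nat.mul_comm t m
    omega
  constructor
  · exact hYt_card
  · intro y hy
    have hyY : y ∈ Yt := by simp only [hYt, mem_filter, mem_univ, true_and]; exact hy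
    rw [← hfib_eq y hyY]
    exact hfib_all y hyY

lemma mul_pm : (q - 1) * (q + 1) = q ^ 2 - 1 := by
  have h3 := S.hq3
  obtain ⟨k, rfl⟩ : ∃ k, q = k + 1 := ⟨q - 1, by omega⟩
  simp only [Nat.add_sub_cancel]
  ring_nf
  omega

lemma mu_card : (univ.filter fun s : F => s ^ (q + 1) = 1).card = q + 1 :=
  (S.pow_count (q - 1) (q + 1) (by have := S.hq3; omega) (by omega) S.mul_pm).1

lemma fiber_qm1 (u : F) (hu : u ^ (q + 1) = 1) :
    (univ.filter fun x : F => x ^ (q - 1) = u).card = q - 1 :=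
  (S.pow_count (q - 1) (q + 1) (by have := S.hq3; omega) (by omega) S.mul_pm).2 u hu

lemma fiber_qp1 (u : F) (hu : u ^ (q - 1) = 1) :
    (univ.filter fun x : F => x ^ (q + 1) = u).card = q + 1 :=
  (S.pow_count (q + 1) (q - 1) (by omega) (by have := S.hq3; omega)
    (by rw [Nat.mul_comm]; exact S.mul_pm)).2 u hu

/-- the set `{x : x ^ q = lam * x}` has `q` elements when `lam ^ (q+1) = 1`. -/
lemma card_shifted (lam : F) (hl : lam ^ (q + 1) = 1) :
    (univ.filter fun x : F => x ^ q = lam * x).card = q := by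
  classical
  have hlam : lam ≠ 0 := by
    intro h; rw [h, zero_pow (by omega)] at hl; exact one_ne_zero hl.symm
  have hset : (univ.filter fun x : F => x ^ q = lam * x)
      = insert (0 : F) (univ.filter fun x : F => x ^ (q - 1) = lam) := by
    ext x
    simp only [mem_insert, mem_filter, mem_univ, true_and]
    constructor
    · intro h
      rcases eq_or_ne x 0 with hx | hx
      · exact Or.inl hx
      · refine Or.inr ?_
        have h2 : x ^ (q - 1) * x = lam * x := by rw [S.pow_q_sub_one_mul]; exact h
        exact mul_right_cancel₀ hx h2
    · rintro (rfl | h)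
      · rw [zero_pow (by have := S.hq3; omega), mul_zero]
      · rw [← S.pow_q_sub_one_mul, h]
  rw [hset, card_insert_of_notMem, S.fiber_qm1 lam hl]
  · have := S.hq3; omega
  · simp only [mem_filter, mem_univ, true_and]
    rw [zero_pow (by have := S.hq3; omega)]
    intro h; exact hlam h.symm

lemma K_card : (univ.filter fun x : F => x ^ q = x).card = q := by
  have h := S.card_shifted 1 (one_pow _)
  simpa using h

lemma add_fiber_count (f : F → F) (hadd : ∀ x y : F, f (x + y) = f x + f y)
    (hker : (univ.filter fun x : F => f x = 0).card = q)
    {W : Finset F} (hW : W.card = q) (him : ∀ x : F, f x ∈ W) :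
    ∀ w ∈ W, (univ.filter fun x : F => f x = w).card = q := by
  classical
  have hf0 : f 0 = 0 := by
    have h := hadd 0 0
    rw [add_zero] at h
    have h2 : f 0 + f 0 = f 0 + 0 := by rw [add_zero]; exact h.symm
    exact (add_left_cancel h2)
  have hsub : ∀ x y : F, f (x - y) = f x - f y := by
    intro x y
    have h1 : f (x - y) + f y = f x := by
      rw [← hadd, sub_add_cancel]
    exact eq_sub_of_add_eq h1
  have hfiber : ∀ x₀ : F, (univ.filter fun x : F => f x = f x₀).card = q := by
    intro x₀
    rw [← hker]
    apply Finset.card_bij' (i := fun x _ => x - x₀) (j := fun t _ => t + x₀)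
    · intro x hx
      simp only [mem_filter, mem_univ, true_and] at hx ⊢
      rw [hsub, hx, sub_self]
    · intro t ht
      simp only [mem_filter, mem_univ, true_and] at ht ⊢
      rw [hadd] at *
      rw [ht, zero_add]
    · intro x hx; rw [sub_add_cancel]
    · intro t ht; rw [add_sub_cancel_right]
  have hsum := Finset.card_eq_sum_card_fiberwise
    (s := (univ : Finset F)) (t := univ.image f) (f := f)
    (fun x _ => mem_image_of_mem f (mem_univ x))
  have hconst : ∀ w ∈ univ.image f, (univ.filter fun x : F => f x = w).card = q := by
    intro w hw
    obtain ⟨x, -, rfl⟩ := mem_image.mp hw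
    exact hfiber x
  have himcard : (univ.image f).card = q := by
    rw [Finset.sum_congr rfl hconst, Finset.sum_const, smul_eq_mul, card_univ, S.hF] at hsum
    have hq0 := S.hq0
    have h2 : q * q = (univ.image f).card * q := by rw [← hsum]; ring
    exact Nat.eq_of_mul_eq_mul_right hq0 h2.symm
  have hWim : univ.image f = W := by
    apply Finset.eq_of_subset_of_card_le
    · intro w hw
      obtain ⟨x, -, rfl⟩ := mem_image.mp hw
      exact him x
    · rw [himcard, hW]
  intro w hw
  rw [← hWim] at hw
  obtain ⟨x, -, rfl⟩ := mem_image.mp hw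
  exact hfiber x

lemma T_fiber (v : F) (hv : v ^ q = v) :
    (univ.filter fun c : F => c ^ q + c = v).card = q := by
  classical
  have hadd : ∀ x y : F, (x + y) ^ q + (x + y) = (x ^ q + x) + (y ^ q + y) := by
    intro x y; rw [S.frob_add]; ring
  have hker : (univ.filter fun c : F => c ^ q + c = 0).card = q := by
    have h1 : (univ.filter fun c : F => c ^ q + c = 0)
        = univ.filter fun c : F => c ^ q = (-1) * c := by
      ext c; simp only [mem_filter, mem_univ, true_and]
      constructor
      · intro h; have : c ^ q = -c := by linear_combination h
        rw [this]; ring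
      · intro h; rw [h]; ring
    rw [h1]
    exact S.card_shifted (-1) (by
      have : Even (q + 1) := S.hodd.add_one
      exact this.neg_one_pow)
  exact S.add_fiber_count (fun c => c ^ q + c) hadd hker S.K_card
    (fun x => by
      simp only [mem_filter, mem_univ, true_and]
      rw [S.frob_add, S.pow_pow]; ring) v
    (by simp only [mem_filter, mem_univ, true_and]; exact hv)

end Setup

/-- the intersection polynomial function. -/
def gf (q : ℕ) {F : Type} [Field F] (a b c : F) (x : F) : F :=
  (a * x ^ 2 + b * x + c) ^ q + (a * x ^ 2 + b * x + c) - x ^ (q + 1)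

namespace Setup
variable (S : Setup q F)
include S

lemma g_eval (a b c x : F) :
    gf q a b c x = a ^ q * (x ^ q) ^ 2 + b ^ q * x ^ q + c ^ q
      + (a * x ^ 2 + b * x + c) - x ^ q * x := by
  unfold gf
  rw [S.frob_add (a * x ^ 2 + b * x) c, S.frob_add (a * x ^ 2) (b * x),
    mul_pow, mul_pow, ← pow_mul, mul_comm 2 q, pow_mul, pow_succ x q]

lemma g_in_K (a b c x : F) : (gf q a b c x) ^ q = gf q a b c x := by
  unfold gf
  rw [S.frob_sub, S.frob_add, S.pow_pow, pow_succ x q, mul_pow, S.pow_pow]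
  ring

section CaseA
variable {a b c : F}

/-- `2a ≠ 0` under the degeneracy condition. -/
lemma two_a_ne (ha : 4 * (a ^ q * a) = 1) : (2 * a : F) ≠ 0 := by
  have hane : a ≠ 0 := by
    rintro rfl
    rw [mul_zero, mul_zero] at ha
    exact one_ne_zero ha.symm
  exact mul_ne_zero S.two_ne hane

lemma twoa_pow (ha : 4 * (a ^ q * a) = 1) : (2 * a) ^ q * (2 * a) = 1 := by
  rw [mul_pow, S.frob_two]
  linear_combination ha

lemma twoa_pow' (ha : 4 * (a ^ q * a) = 1) : (2 * a) ^ (q + 1) = 1 := by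
  rw [pow_succ]; exact S.twoa_pow ha

/-- the kernel of `ℓ(x) = 2ax - x^q` has `q` elements. -/
lemma ker_l_card (ha : 4 * (a ^ q * a) = 1) :
    (univ.filter fun t : F => 2 * a * t - t ^ q = 0).card = q := by
  have h : (univ.filter fun t : F => 2 * a * t - t ^ q = 0)
      = univ.filter fun t : F => t ^ q = 2 * a * t := by
    ext t; simp only [mem_filter, mem_univ, true_and]
    constructor
    · intro h; linear_combination -h
    · intro h; linear_combination -h
  rw [h]
  exact S.card_shifted (2 * a) (S.twoa_pow' ha)

/-- the image line `W = {w : w^q (2a) = -w}` has `q` elements. -/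
lemma W_card (ha : 4 * (a ^ q * a) = 1) :
    (univ.filter fun w : F => w ^ q * (2 * a) = -w).card = q := by
  have h2a := S.two_a_ne ha
  have h : (univ.filter fun w : F => w ^ q * (2 * a) = -w)
      = univ.filter fun w : F => w ^ q = (-(2 * a)⁻¹) * w := by
    ext w; simp only [mem_filter, mem_univ, true_and]
    constructor
    · intro h
      have hinv : (2 * a)⁻¹ * (2 * a) = 1 := inv_mul_cancel₀ h2a
      linear_combination (2 * a)⁻¹ * h - w ^ q * hinv
    · intro h
      rw [h]
      have hinv : (2 * a)⁻¹ * (2 * a) = 1 := inv_mul_cancel₀ h2a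
      linear_combination (-w) * hinv
  rw [h]
  refine S.card_shifted _ ?_
  have he : Even (q + 1) := S.hodd.add_one
  rw [he.neg_pow, inv_pow, S.twoa_pow' ha, inv_one]

/-- `ℓ(x)` always lands in `W`. -/
lemma l_mem_W (ha : 4 * (a ^ q * a) = 1) (x : F) :
    (2 * a * x - x ^ q) ^ q * (2 * a) = -(2 * a * x - x ^ q) := by
  rw [S.frob_sub, mul_pow, mul_pow, S.frob_two, S.pow_pow]
  linear_combination x ^ q * ha

/-- fibers of `ℓ` over points of `W` have exactly `q` elements. -/
lemma l_fiber (ha : 4 * (a ^ q * a) = 1) (w : F)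
    (hw : w ^ q * (2 * a) = -w) :
    (univ.filter fun x : F => 2 * a * x - x ^ q = w).card = q := by
  refine S.add_fiber_count (fun x => 2 * a * x - x ^ q) ?_ (S.ker_l_card ha)
    (S.W_card ha) ?_ w ?_
  · intro x y
    try dsimp only
    rw [S.frob_add]; ring
  · intro x
    simp only [mem_filter, mem_univ, true_and]
    exact S.l_mem_W ha x
  · simp only [mem_filter, mem_univ, true_and]; exact hw

/-- Key identity for good `(a, b)`: `4a·g(x) = ℓ(x)² + 2b·ℓ(x) + 4a·T(c)`. -/
lemma key_identity (ha : 4 * (a ^ q * a) = 1)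
    (hb : 2 * a * b ^ q + b = 0) (x : F) :
    4 * a * gf q a b c x
      = (2 * a * x - x ^ q) ^ 2 + 2 * b * (2 * a * x - x ^ q) + 4 * a * (c ^ q + c) := by
  rw [S.g_eval]
  linear_combination (x ^ q) ^ 2 * ha + 2 * x ^ q * hb

/-- Case A, good `b`, good `c`: exactly `2q` points. -/
lemma caseA_good (ha : 4 * (a ^ q * a) = 1)
    (hb : 2 * a * b ^ q + b = 0) (δ : F) (hd1 : δ ^ q * (2 * a) = -δ) (hd2 : δ ≠ 0)
    (hd3 : δ ^ 2 = b ^ 2 - 4 * a * (c ^ q + c)) :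
    (univ.filter fun x : F => gf q a b c x = 0).card = 2 * q := by
  classical
  have h4a : (4 * a : F) ≠ 0 := by
    have := S.two_a_ne ha
    have h4 : (4 * a : F) = 2 * (2 * a) := by ring
    rw [h4]; exact mul_ne_zero S.two_ne this
  have hzp : ((-b + δ) : F) ^ q * (2 * a) = -(-b + δ) := by
    rw [S.frob_add, S.frob_neg]
    have hbq : b ^ q * (2 * a) = -b := by linear_combination hb
    linear_combination -hbq + hd1
  have hzm : ((-b - δ) : F) ^ q * (2 * a) = -(-b - δ) := by
    rw [S.frob_sub, S.frob_neg]
    have hbq : b ^ q * (2 * a) = -b := by linear_combination hb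
    linear_combination -hbq - hd1
  have hset : (univ.filter fun x : F => gf q a b c x = 0)
      = (univ.filter fun x : F => 2 * a * x - x ^ q = -b + δ)
        ∪ (univ.filter fun x : F => 2 * a * x - x ^ q = -b - δ) := by
    ext x
    simp only [mem_union, mem_filter, mem_univ, true_and]
    constructor
    · intro h
      have h2 : ((2 * a * x - x ^ q) - (-b + δ)) * ((2 * a * x - x ^ q) - (-b - δ)) = 0 := by
        have hk := S.key_identity ha hb (c := c) x
        rw [h, mul_zero] at hk
        linear_combination -hk - hd3
      rcases mul_eq_zero.mp h2 with h3 | h3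
      · exact Or.inl (by linear_combination h3)
      · exact Or.inr (by linear_combination h3)
    · intro h
      have hk := S.key_identity ha hb (c := c) x
      have h2 : 4 * a * gf q a b c x = 0 := by
        rcases h with h | h
        · rw [hk, h]; linear_combination hd3
        · rw [hk, h]; linear_combination hd3
      exact (mul_eq_zero.mp h2).resolve_left h4a
  rw [hset, card_union_of_disjoint, S.l_fiber ha _ hzp, S.l_fiber ha _ hzm, two_mul]
  rw [Finset.disjoint_left]
  intro x hx1 hx2
  simp only [mem_filter, mem_univ, true_and] at hx1 hx2
  rw [hx1] at hx2
  have : (2 : F) * δ = 0 := by linear_combination hx2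
  rcases mul_eq_zero.mp this with h | h
  · exact S.two_ne h
  · exact hd2 h

/-- Case A, good `b`, bad `c`: at most `q` points. -/
lemma caseA_badc (ha : 4 * (a ^ q * a) = 1)
    (hb : 2 * a * b ^ q + b = 0)
    (hno : ¬∃ δ : F, δ ^ q * (2 * a) = -δ ∧ δ ≠ 0 ∧ δ ^ 2 = b ^ 2 - 4 * a * (c ^ q + c)) :
    (univ.filter fun x : F => gf q a b c x = 0).card ≤ q := by
  classical
  rcases Finset.eq_empty_or_nonempty (univ.filter fun x : F => gf q a b c x = 0) with he | ⟨x₁, hx₁⟩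
  · rw [he]; simp
  simp only [mem_filter, mem_univ, true_and] at hx₁
  have hsub : (univ.filter fun x : F => gf q a b c x = 0)
      ⊆ univ.filter fun x : F => 2 * a * x - x ^ q = 2 * a * x₁ - x₁ ^ q := by
    intro x hx
    simp only [mem_filter, mem_univ, true_and] at hx ⊢
    by_contra hne
    set z₁ := 2 * a * x - x ^ q with hz₁
    set z₂ := 2 * a * x₁ - x₁ ^ q with hz₂
    have hr1 : z₁ ^ 2 + 2 * b * z₁ + 4 * a * (c ^ q + c) = 0 := by
      rw [← S.key_identity ha hb, hx, mul_zero]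
    have hr2 : z₂ ^ 2 + 2 * b * z₂ + 4 * a * (c ^ q + c) = 0 := by
      rw [← S.key_identity ha hb, hx₁, mul_zero]
    have hzd : z₁ - z₂ ≠ 0 := fun h => hne (by linear_combination h)
    have hsum : z₁ + z₂ = -(2 * b) := by
      have h3 : (z₁ - z₂) * (z₁ + z₂ + 2 * b) = 0 := by linear_combination hr1 - hr2
      rcases mul_eq_zero.mp h3 with h | h
      · exact absurd h hzd
      · linear_combination h
    refine hno ⟨(z₁ - z₂) / 2, ?_, ?_, ?_⟩
    · have hw1 := S.l_mem_W ha x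
      have hw2 := S.l_mem_W ha x₁
      have h2 : ((z₁ - z₂) / 2) ^ q = (z₁ ^ q - z₂ ^ q) / 2 := by
        rw [div_pow, S.frob_sub, S.frob_two]
      rw [h2, div_mul_eq_mul_div, ← neg_div, div_eq_div_iff S.two_ne S.two_ne]
      linear_combination 2 * hw1 - 2 * hw2
    · exact div_ne_zero hzd S.two_ne
    · have h4 : ((z₁ - z₂) / 2) ^ 2 = ((z₁ + z₂) ^ 2 - 4 * (z₁ * z₂)) / 4 := by
        field_simp
        ring
      rw [h4, hsum]
      have hprod : z₁ * z₂ = 4 * a * (c ^ q + c) := by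
        have : z₂ = -(2 * b) - z₁ := by linear_combination hsum
        rw [this]
        linear_combination -hr1
      rw [hprod, div_eq_iff S.four_ne]
      ring
  calc (univ.filter fun x : F => gf q a b c x = 0).card
      ≤ (univ.filter fun x : F => 2 * a * x - x ^ q = 2 * a * x₁ - x₁ ^ q).card :=
        Finset.card_le_card hsub
    _ = q := S.l_fiber ha _ (S.l_mem_W ha x₁)

/-- Case A, bad `b`: exactly `q` points. -/
lemma caseA_badb (ha : 4 * (a ^ q * a) = 1) (hb' : 2 * a * b ^ q + b ≠ 0) :
    (univ.filter fun x : F => gf q a b c x = 0).card = q := by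
  classical
  have hshift : ∀ x t : F, t ^ q = 2 * a * t →
      gf q a b c (x + t) = gf q a b c x + (2 * a * b ^ q + b) * t := by
    intro x t ht
    rw [S.g_eval, S.g_eval]
    have hxt : (x + t) ^ q = x ^ q + 2 * a * t := by rw [S.frob_add, ht]
    rw [hxt]
    linear_combination (t * x ^ q + a * t ^ 2) * ha
  have hβq : (2 * a * b ^ q + b) ^ q * (2 * a) = 2 * a * b ^ q + b := by
    rw [S.frob_add, mul_pow, mul_pow, S.frob_two, S.pow_pow]
    linear_combination b * ha
  have him : univ.image (fun x : F => 2 * a * x - x ^ q)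
      = univ.filter fun w : F => w ^ q * (2 * a) = -w := by
    apply Finset.Subset.antisymm
    · intro w hw
      obtain ⟨x, -, rfl⟩ := mem_image.mp hw
      simp only [mem_filter, mem_univ, true_and]
      exact S.l_mem_W ha x
    · intro w hw
      simp only [mem_filter, mem_univ, true_and] at hw
      have hc := S.l_fiber ha w hw
      have hpos : 0 < (univ.filter fun x : F => 2 * a * x - x ^ q = w).card := by
        rw [hc]; exact S.hq0
      obtain ⟨x, hx⟩ := Finset.card_pos.mp hpos
      simp only [mem_filter, mem_univ, true_and] at hx
      exact mem_image.mpr ⟨x, mem_univ x, hx⟩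
  have hcard : (univ.filter fun x : F => gf q a b c x = 0).card
      = (univ.image (fun x : F => 2 * a * x - x ^ q)).card := by
    refine Finset.card_bij (fun x _ => 2 * a * x - x ^ q) ?_ ?_ ?_
    · intro x _hx
      exact mem_image_of_mem _ (mem_univ x)
    · intro x hx x' hx' hxx
      simp only [mem_filter, mem_univ, true_and] at hx hx'
      try simp only at hxx
      by_contra hne
      have ht : (x' - x) ^ q = 2 * a * (x' - x) := by
        rw [S.frob_sub]; linear_combination hxx
      have hsh := hshift x (x' - x) ht
      rw [add_sub_cancel, hx, hx'] at hsh
      have hz2 : (2 * a * b ^ q + b) * (x' - x) = 0 := by linear_combination -hsh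
      rcases mul_eq_zero.mp hz2 with h | h
      · exact hb' h
      · exact hne (sub_eq_zero.mp h).symm
    · intro w hw
      obtain ⟨x₁, -, hx₁⟩ := mem_image.mp hw
      set t : F := -(gf q a b c x₁) * (2 * a * b ^ q + b)⁻¹ with htdef
      have hβqne : (2 * a * b ^ q + b) ^ q ≠ 0 := pow_ne_zero _ hb'
      have ht : t ^ q = 2 * a * t := by
        rw [htdef, mul_pow, S.frob_neg, S.g_in_K, inv_pow]
        field_simp
        linear_combination (gf q a b c x₁) * hβq
      have hz : gf q a b c (x₁ + t) = 0 := by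
        rw [hshift x₁ t ht, htdef]
        field_simp
        ring
      refine ⟨x₁ + t, ?_, ?_⟩
      · simp only [mem_filter, mem_univ, true_and]; exact hz
      · show 2 * a * (x₁ + t) - (x₁ + t) ^ q = w
        rw [S.frob_add, ht]
        linear_combination hx₁
  rw [hcard, him, S.W_card ha]

end CaseA

section CaseB
variable {a b c : F}

omit S in
private lemma ne_zero_of_rootOne {n : ℕ} (hn : 0 < n) {s : F} (hs : s ^ n = 1) : s ≠ 0 := by
  rintro rfl
  rw [zero_pow (by omega)] at hs
  exact one_ne_zero hs.symm

/-- sum of i-th powers over the (q+1)-st roots of unity vanishes for 1 ≤ i ≤ q. -/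
lemma mu_pow_sum (i : ℕ) (hi1 : 1 ≤ i) (hiq : i ≤ q) :
    ∑ s ∈ univ.filter (fun s : F => s ^ (q + 1) = 1), s ^ i = 0 := by
  classical
  obtain ⟨ζ, hζmu, hζi⟩ : ∃ ζ : F, ζ ^ (q + 1) = 1 ∧ ζ ^ i ≠ 1 := by
    by_contra hc
    push_neg at hc
    have h1 : (univ.filter fun s : F => s ^ (q + 1) = 1)
        ⊆ univ.filter fun s : F => s ^ i = 1 := by
      intro s hs
      simp only [mem_filter, mem_univ, true_and] at hs ⊢
      exact hc s hs
    have h2 := card_le_card h1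
    rw [S.mu_card] at h2
    have h3 := S.pow_fiber_le i (by omega) 1
    omega
  have hζ0 : ζ ≠ 0 := ne_zero_of_rootOne (by omega) hζmu
  have hre : ∑ s ∈ univ.filter (fun s : F => s ^ (q + 1) = 1), s ^ i
      = ∑ s ∈ univ.filter (fun s : F => s ^ (q + 1) = 1), (ζ * s) ^ i := by
    refine Finset.sum_nbij' (fun s => ζ⁻¹ * s) (fun t => ζ * t) ?_ ?_ ?_ ?_ ?_
    · intro s hs
      simp only [mem_filter, mem_univ, true_and] at hs ⊢
      rw [mul_pow, inv_pow, hζmu, inv_one, one_mul, hs]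
    · intro t ht
      simp only [mem_filter, mem_univ, true_and] at ht ⊢
      rw [mul_pow, hζmu, one_mul, ht]
    · intro s _; field_simp
    · intro t _; field_simp
    · intro s _
      rw [mul_pow, mul_pow, inv_pow, ← mul_assoc, mul_inv_cancel₀ (pow_ne_zero _ hζ0), one_mul]
  have h2 : ∑ s ∈ univ.filter (fun s : F => s ^ (q + 1) = 1), (ζ * s) ^ i
      = ζ ^ i * ∑ s ∈ univ.filter (fun s : F => s ^ (q + 1) = 1), s ^ i := by
    rw [Finset.mul_sum]
    apply Finset.sum_congr rfl
    intro s _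
    rw [mul_pow]
  have h3 : (ζ ^ i - 1) * ∑ s ∈ univ.filter (fun s : F => s ^ (q + 1) = 1), s ^ i = 0 := by
    rw [sub_mul, one_mul, sub_eq_zero, ← h2, ← hre]
  rcases mul_eq_zero.mp h3 with h | h
  · exact absurd (by linear_combination h) hζi
  · exact h

/-- The balance sum: `∑_{s^(q+1)=1} s·R(s)^m = 0` where `m = (q-1)/2`. -/
lemma balance_sum (m : ℕ) (hm1 : 1 ≤ m) (hm2 : 2 * m + 1 = q) :
    ∑ s ∈ univ.filter (fun s : F => s ^ (q + 1) = 1),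
      s * (a ^ q * s ^ 2 - s + a) ^ m = 0 := by
  classical
  set f : Polynomial F := Polynomial.X *
    (Polynomial.C (a ^ q) * Polynomial.X ^ 2 - Polynomial.X + Polynomial.C a) ^ m with hf
  have hdeg : f.natDegree < q + 1 := by
    have h1 : (Polynomial.C (a ^ q) * Polynomial.X ^ 2 - Polynomial.X
        + Polynomial.C a).natDegree ≤ 2 := by
      compute_degree
    calc f.natDegree ≤ (Polynomial.X : Polynomial F).natDegree
        + ((Polynomial.C (a ^ q) * Polynomial.X ^ 2 - Polynomial.X
          + Polynomial.C a) ^ m).natDegree := Polynomial.natDegree_mul_le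
      _ ≤ 1 + m * 2 := by
          have := Polynomial.natDegree_pow_le (p := Polynomial.C (a ^ q) * Polynomial.X ^ 2
            - Polynomial.X + Polynomial.C a) (n := m)
          have h2 : m * (Polynomial.C (a ^ q) * Polynomial.X ^ 2 - Polynomial.X
              + Polynomial.C a).natDegree ≤ m * 2 := Nat.mul_le_mul_left m h1
          simp only [Polynomial.natDegree_X]
          omega
      _ < q + 1 := by omega
  have hc0 : f.coeff 0 = 0 := by
    rw [hf, Polynomial.mul_coeff_zero, Polynomial.coeff_X_zero, zero_mul]
  have heval : ∀ s : F, f.eval s = s * (a ^ q * s ^ 2 - s + a) ^ m := by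
    intro s
    simp [hf]
  have hsum : ∑ s ∈ univ.filter (fun s : F => s ^ (q + 1) = 1), f.eval s = 0 := by
    have hexp : ∀ s : F, f.eval s = ∑ i ∈ Finset.range (q + 1), f.coeff i * s ^ i :=
      fun s => Polynomial.eval_eq_sum_range' hdeg s
    calc ∑ s ∈ univ.filter (fun s : F => s ^ (q + 1) = 1), f.eval s
        = ∑ s ∈ univ.filter (fun s : F => s ^ (q + 1) = 1),
            ∑ i ∈ Finset.range (q + 1), f.coeff i * s ^ i := by
          exact Finset.sum_congr rfl fun s _ => hexp s
      _ = ∑ i ∈ Finset.range (q + 1),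
            ∑ s ∈ univ.filter (fun s : F => s ^ (q + 1) = 1), f.coeff i * s ^ i :=
          Finset.sum_comm
      _ = 0 := by
          apply Finset.sum_eq_zero
          intro i hi
          rw [← Finset.mul_sum]
          rcases Nat.eq_zero_or_pos i with rfl | hipos
          · rw [hc0, zero_mul]
          · rw [S.mu_pow_sum i hipos (by simp only [Finset.mem_range] at hi; omega), mul_zero]
  calc ∑ s ∈ univ.filter (fun s : F => s ^ (q + 1) = 1), s * (a ^ q * s ^ 2 - s + a) ^ m
      = ∑ s ∈ univ.filter (fun s : F => s ^ (q + 1) = 1), f.eval s :=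
        Finset.sum_congr rfl fun s _ => (heval s).symm
    _ = 0 := hsum

lemma pow_qsq_sub_one {t : F} (ht : t ≠ 0) : t ^ (q ^ 2 - 1) = 1 := by
  have hq2 : 1 ≤ q ^ 2 := Nat.one_le_pow _ _ S.hq0
  have h1 : t ^ (q ^ 2 - 1) * t = t ^ (q ^ 2) := by
    rw [← pow_succ]; congr 1; omega
  have h2 : t ^ (q ^ 2) = t := by
    rw [pow_two, pow_mul, S.pow_pow]
  have h3 : t ^ (q ^ 2 - 1) * t = 1 * t := by rw [h1, h2, one_mul]
  exact mul_right_cancel₀ ht h3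

/-- Case B: nondegenerate `a`; the count is never `2q`. -/
lemma caseB (ha' : 4 * (a ^ q * a) ≠ 1) (hane : a ≠ 0) :
    (univ.filter fun x : F => gf q a b c x = 0).card ≠ 2 * q := by
  classical
  have haq : a ^ q ≠ 0 := pow_ne_zero _ hane
  -- step 1 : a shift point x₀ killing linear terms
  obtain ⟨x₀, hx₀⟩ : ∃ x₀ : F, x₀ ^ q - 2 * a * x₀ = b := by
    have hinj : Function.Injective (fun x : F => x ^ q - 2 * a * x) := by
      intro x y hxy
      simp only at hxy
      by_contra hne
      have ht : (x - y) ^ q = 2 * a * (x - y) := by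
        rw [S.frob_sub]; linear_combination hxy
      have htne : x - y ≠ 0 := sub_ne_zero.mpr hne
      have h1 : (x - y) ^ (q - 1) * (x - y) = 2 * a * (x - y) := by
        rw [S.pow_q_sub_one_mul]; exact ht
      have h2 : (x - y) ^ (q - 1) = 2 * a := mul_right_cancel₀ htne h1
      have h3 : (2 * a) ^ (q + 1) = 1 := by
        rw [← h2, ← pow_mul, S.mul_pm, S.pow_qsq_sub_one htne]
      apply ha'
      calc 4 * (a ^ q * a) = (2 * a) ^ (q + 1) := by
            rw [pow_succ, mul_pow, S.frob_two]; ring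
        _ = 1 := h3
    exact Finite.injective_iff_surjective.mp hinj b
  have hb' : b ^ q = x₀ - 2 * a ^ q * x₀ ^ q := by
    rw [← hx₀, S.frob_sub, S.pow_pow, mul_pow, mul_pow, S.frob_two]
  set c₀ := gf q a b c x₀ with hc₀
  have hc₀K : c₀ ^ q = c₀ := S.g_in_K a b c x₀
  have key : ∀ u : F, gf q a b c (u + x₀)
      = a ^ q * (u ^ q) ^ 2 - u ^ q * u + a * u ^ 2 + c₀ := by
    intro u
    rw [hc₀, S.g_eval, S.g_eval, S.frob_add u x₀, hb', ← hx₀]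
    ring
  have hcard : (univ.filter fun x : F => gf q a b c x = 0).card
      = (univ.filter fun u : F =>
          a ^ q * (u ^ q) ^ 2 - u ^ q * u + a * u ^ 2 + c₀ = 0).card := by
    symm
    apply Finset.card_bij' (fun u _ => u + x₀) (fun x _ => x - x₀)
    · intro u hu
      simp only [mem_filter, mem_univ, true_and] at hu ⊢
      rw [key u, hu]
    · intro x hx
      simp only [mem_filter, mem_univ, true_and] at hx ⊢
      have := key (x - x₀)
      rw [sub_add_cancel] at this
      rw [← this, hx]
    · intro u _; rw [add_sub_cancel_right]
    · intro x _; rw [sub_add_cancel]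
  rw [hcard]
  have hQfact : ∀ u : F, a ^ q * (u ^ q) ^ 2 - u ^ q * u + a * u ^ 2
      = u ^ 2 * (a ^ q * (u ^ (q - 1)) ^ 2 - u ^ (q - 1) + a) := by
    intro u
    rw [← S.pow_q_sub_one_mul u]
    ring
  have hdich : ∀ s₀ t : F, a ^ q * s₀ ^ 2 - s₀ + a = 0 → a ^ q * t ^ 2 - t + a = 0 →
      t = s₀ ∨ t = (a ^ q)⁻¹ - s₀ := by
    intro s₀ t hs₀ ht
    have h2 : (t - s₀) * (a ^ q * (t + s₀) - 1) = 0 := by linear_combination ht - hs₀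
    rcases mul_eq_zero.mp h2 with h | h
    · left; linear_combination h
    · right
      have h3 : a ^ q * (t + s₀) = 1 := by linear_combination h
      field_simp
      linear_combination h3
  by_cases hc0 : c₀ = 0
  · -- at most 2q - 1 points
    have hbound : (univ.filter fun u : F =>
        a ^ q * (u ^ q) ^ 2 - u ^ q * u + a * u ^ 2 + c₀ = 0).card ≤ 2 * q - 1 := by
      by_cases hroot : ∃ s : F, a ^ q * s ^ 2 - s + a = 0
      · obtain ⟨s₀, hs₀⟩ := hroot
        have hsub : (univ.filter fun u : F =>
            a ^ q * (u ^ q) ^ 2 - u ^ q * u + a * u ^ 2 + c₀ = 0)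
            ⊆ insert (0 : F) ((univ.filter fun u : F => u ^ (q - 1) = s₀)
              ∪ (univ.filter fun u : F => u ^ (q - 1) = (a ^ q)⁻¹ - s₀)) := by
          intro u hu
          simp only [mem_filter, mem_univ, true_and, mem_insert, mem_union] at hu ⊢
          rcases eq_or_ne u 0 with rfl | hu0
          · exact Or.inl rfl
          · right
            rw [hc0, add_zero, hQfact] at hu
            have hR : a ^ q * (u ^ (q - 1)) ^ 2 - u ^ (q - 1) + a = 0 := by
              rcases mul_eq_zero.mp hu with h | h
              · exact absurd (pow_eq_zero_iff two_ne_zero |>.mp h) hu0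
              · exact h
            rcases hdich s₀ _ hs₀ hR with h | h
            · exact Or.inl h
            · exact Or.inr h
        calc (univ.filter fun u : F =>
            a ^ q * (u ^ q) ^ 2 - u ^ q * u + a * u ^ 2 + c₀ = 0).card
            ≤ _ := Finset.card_le_card hsub
          _ ≤ ((univ.filter fun u : F => u ^ (q - 1) = s₀)
              ∪ (univ.filter fun u : F => u ^ (q - 1) = (a ^ q)⁻¹ - s₀)).card + 1 :=
              Finset.card_insert_le _ _
          _ ≤ ((q - 1) + (q - 1)) + 1 := by
              have h1 := S.pow_fiber_le (q - 1) (by have := S.hq3; omega) s₀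
              have h2 := S.pow_fiber_le (q - 1) (by have := S.hq3; omega) ((a ^ q)⁻¹ - s₀)
              have h3 := Finset.card_union_le
                (univ.filter fun u : F => u ^ (q - 1) = s₀)
                (univ.filter fun u : F => u ^ (q - 1) = (a ^ q)⁻¹ - s₀)
              omega
          _ ≤ 2 * q - 1 := by have := S.hq3; omega

      · -- no root : only u = 0 possible
        have hsub : (univ.filter fun u : F =>
            a ^ q * (u ^ q) ^ 2 - u ^ q * u + a * u ^ 2 + c₀ = 0) ⊆ {(0 : F)} := by
          intro u hu
          simp only [mem_filter, mem_univ, true_and, mem_singleton] at hu ⊢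
          by_contra hu0
          rw [hc0, add_zero, hQfact] at hu
          rcases mul_eq_zero.mp hu with h | h
          · exact hu0 (pow_eq_zero_iff two_ne_zero |>.mp h)
          · exact hroot ⟨u ^ (q - 1), h⟩
        have := Finset.card_le_card hsub
        simp only [card_singleton] at this
        have := S.hq3
        omega
    have := S.hq3
    omega
  · -- c₀ ≠ 0 : derive a contradiction from card = 2q
    intro h2q
    obtain ⟨r, hr⟩ := S.hodd
    have hq3 := S.hq3
    set m := (q - 1) / 2 with hmdef
    have hm2 : 2 * m + 1 = q := by omega
    have hm1 : 1 ≤ m := by omega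
    set R : F → F := fun s => a ^ q * s ^ 2 - s + a with hR
    set σ : F → F := fun s => s * (R s) ^ m with hσ
    set ε := (-c₀) ^ m with hε
    have hc₀ne : (-c₀ : F) ≠ 0 := neg_ne_zero.mpr hc0
    have hc₀q : (-c₀ : F) ^ q = -c₀ := by rw [S.frob_neg, hc₀K]
    have hε2 : ε ^ 2 = 1 := by
      rw [hε, ← pow_mul]
      have hmm : m * 2 = q - 1 := by omega
      rw [hmm]
      have h1 : (-c₀ : F) ^ (q - 1) * (-c₀) = 1 * (-c₀) := by
        rw [S.pow_q_sub_one_mul, hc₀q, one_mul]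
      exact mul_right_cancel₀ hc₀ne h1
    have hεne : ε ≠ 0 := pow_ne_zero _ hc₀ne
    set Zq := univ.filter (fun u : F =>
      a ^ q * (u ^ q) ^ 2 - u ^ q * u + a * u ^ 2 + c₀ = 0) with hZq
    have hfacts : ∀ u ∈ Zq, u ≠ 0 ∧ (u ^ (q - 1)) ^ (q + 1) = 1 ∧
        R (u ^ (q - 1)) ≠ 0 ∧ u ^ 2 * R (u ^ (q - 1)) = -c₀ ∧ σ (u ^ (q - 1)) = ε := by
      intro u hu
      simp only [hZq, mem_filter, mem_univ, true_and] at hu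
      have hu0 : u ≠ 0 := by
        rintro rfl
        rw [zero_pow S.hq0.ne'] at hu
        simp only [ne_eq, OfNat.ofNat_ne_zero, not_false_eq_true, zero_pow, mul_zero,
          zero_mul, sub_zero, zero_add, mul_zero, zero_add] at hu
        exact hc0 hu
      have huQ : u ^ 2 * R (u ^ (q - 1)) = -c₀ := by
        rw [hR]
        have h1 := hQfact u
        linear_combination hu - h1
      have hRne : R (u ^ (q - 1)) ≠ 0 := by
        intro h
        rw [h, mul_zero] at huQ
        exact hc₀ne huQ.symm
      have hmu : (u ^ (q - 1)) ^ (q + 1) = 1 := by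
        rw [← pow_mul, S.mul_pm, S.pow_qsq_sub_one hu0]
      have hσε : σ (u ^ (q - 1)) = ε := by
        rw [hσ, hε, ← huQ, mul_pow, ← pow_mul u 2 m]
        have hmm : 2 * m = q - 1 := by omega
        rw [hmm]
      exact ⟨hu0, hmu, hRne, huQ, hσε⟩
    set Im := Zq.image (fun u => u ^ (q - 1)) with hIm
    have hImcard : q ≤ Im.card := by
      have hmap : ∀ u ∈ Zq, u ^ (q - 1) ∈ Im := fun u hu => mem_image_of_mem _ hu
      have hdec := Finset.card_eq_sum_card_fiberwise hmap
      have hfib : ∀ s ∈ Im, (Zq.filter fun u => u ^ (q - 1) = s).card ≤ 2 := by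
        intro s hs
        obtain ⟨u₁, hu₁, rfl⟩ := mem_image.mp hs
        obtain ⟨-, -, hRne, huQ, -⟩ := hfacts u₁ hu₁
        have hsub2 : (Zq.filter fun u => u ^ (q - 1) = u₁ ^ (q - 1))
            ⊆ univ.filter fun u : F => u ^ 2 = -c₀ * (R (u₁ ^ (q - 1)))⁻¹ := by
          intro u hu
          rw [mem_filter] at hu
          obtain ⟨huZ, hus⟩ := hu
          obtain ⟨-, -, -, huQ2, -⟩ := hfacts u huZ
          simp only [mem_filter, mem_univ, true_and]
          rw [hus] at huQ2
          rw [eq_comm, mul_inv_eq_iff_eq_mul₀ hRne]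
          exact huQ2.symm
        calc (Zq.filter fun u => u ^ (q - 1) = u₁ ^ (q - 1)).card
            ≤ _ := Finset.card_le_card hsub2
          _ ≤ 2 := S.pow_fiber_le 2 (by omega) _
      have hle : Zq.card ≤ Im.card * 2 := by
        rw [hdec]
        calc ∑ s ∈ Im, (Zq.filter fun u => u ^ (q - 1) = s).card ≤ ∑ _s ∈ Im, 2 :=
            Finset.sum_le_sum hfib
          _ = Im.card * 2 := by rw [sum_const, smul_eq_mul]
      rw [h2q] at hle
      omega
    set M := (univ.filter fun s : F => s ^ (q + 1) = 1).filter (fun s => R s ≠ 0) with hM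
    have hIm_sub : Im ⊆ M.filter (fun s => σ s = ε) := by
      intro s hs
      obtain ⟨u, hu, rfl⟩ := mem_image.mp hs
      obtain ⟨-, hmu, hRne, -, hσε⟩ := hfacts u hu
      simp only [hM, mem_filter, mem_univ, true_and]
      exact ⟨⟨hmu, hRne⟩, hσε⟩
    have hσpm : ∀ s ∈ M, σ s = ε ∨ σ s = -ε := by
      intro s hsM
      simp only [hM, mem_filter, mem_univ, true_and] at hsM
      obtain ⟨hsmu, hsR⟩ := hsM
      have hss : s ^ q * s = 1 := by rw [← pow_succ]; exact hsmu
      have hRq : (R s) ^ q * s ^ 2 = R s := by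
        rw [hR]
        dsimp only
        rw [S.frob_add, S.frob_sub, mul_pow, S.pow_pow]
        have hs2 : (s ^ 2) ^ q = (s ^ q) ^ 2 := by rw [← pow_mul, mul_comm, pow_mul]
        rw [hs2]
        linear_combination (a * (s ^ q * s) + a - s) * hss
      have hσ2 : (σ s) ^ 2 = 1 := by
        have h1 : (σ s) ^ 2 * R s = R s := by
          rw [hσ]
          dsimp only
          calc (s * R s ^ m) ^ 2 * R s = s ^ 2 * R s ^ (2 * m + 1) := by ring
            _ = s ^ 2 * R s ^ q := by rw [hm2]
            _ = R s := by linear_combination hRq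
        have h2 : (σ s) ^ 2 * R s = 1 * R s := by rw [h1, one_mul]
        exact mul_right_cancel₀ hsR h2
      have h3 : (σ s - ε) * (σ s + ε) = 0 := by linear_combination hσ2 - hε2
      rcases mul_eq_zero.mp h3 with h | h
      · left; linear_combination h
      · right; linear_combination h
    have hMsum : ∑ s ∈ M, σ s = 0 := by
      have h1 := S.balance_sum (a := a) m hm1 hm2
      have h2 : ∑ s ∈ M, σ s
          + ∑ s ∈ (univ.filter fun s : F => s ^ (q + 1) = 1).filter (fun s => ¬ R s ≠ 0), σ s
          = ∑ s ∈ (univ.filter fun s : F => s ^ (q + 1) = 1), σ s := by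
        rw [hM]
        exact Finset.sum_filter_add_sum_filter_not _ _ _
      have h3 : ∑ s ∈ (univ.filter fun s : F => s ^ (q + 1) = 1).filter
          (fun s => ¬ R s ≠ 0), σ s = 0 := by
        apply Finset.sum_eq_zero
        intro s hs
        rw [mem_filter, not_not] at hs
        rw [hσ]
        dsimp only
        rw [hs.2, zero_pow (by omega : m ≠ 0), mul_zero]
      have h4 : ∑ s ∈ (univ.filter fun s : F => s ^ (q + 1) = 1), σ s = 0 := by
        rw [← h1]
      rw [h3, add_zero, h4] at h2
      exact h2
    set Sp := M.filter (fun s => σ s = ε) with hSp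
    set Sn := M.filter (fun s => ¬ σ s = ε) with hSn
    have hSn' : ∀ s ∈ Sn, σ s = -ε := by
      intro s hs
      rw [hSn, mem_filter] at hs
      rcases hσpm s hs.1 with h | h
      · exact absurd h hs.2
      · exact h
    have hsum2 : ∑ s ∈ M, σ s = (Sp.card : F) * ε + (Sn.card : F) * (-ε) := by
      rw [← Finset.sum_filter_add_sum_filter_not M (fun s => σ s = ε)]
      congr 1
      · rw [Finset.sum_congr rfl (fun s hs => (mem_filter.mp hs).2), sum_const, nsmul_eq_mul]
      · rw [Finset.sum_congr rfl (fun s hs => hSn' s hs), sum_const, nsmul_eq_mul]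
    have hcast : (Sp.card : F) = (Sn.card : F) := by
      have h := hMsum
      rw [hsum2] at h
      have h2 : ((Sp.card : F) - Sn.card) * ε = 0 := by linear_combination h
      rcases mul_eq_zero.mp h2 with h3 | h3
      · linear_combination h3
      · exact absurd h3 hεne
    have hq_le_Sp : q ≤ Sp.card := le_trans hImcard (card_le_card hIm_sub)
    have hMcard_le : M.card ≤ q + 1 := by
      have hsub := Finset.filter_subset (fun s => R s ≠ 0)
        (univ.filter fun s : F => s ^ (q + 1) = 1)
      have h := card_le_card hsub
      rw [S.mu_card] at h
      rw [hM]
      exact h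
    have hSpSn : Sp.card + Sn.card = M.card := by
      rw [hSp, hSn]
      exact Finset.card_filter_add_card_filter_not _
    have hSp_le : Sp.card ≤ q + 1 := by omega
    have hSn_le : Sn.card ≤ 1 := by omega
    have hdF : ((Sp.card - Sn.card : ℕ) : F) = 0 := by
      have hd : Sp.card = Sn.card + (Sp.card - Sn.card) := by omega
      have h1 : ((Sn.card + (Sp.card - Sn.card) : ℕ) : F) = (Sn.card : F) := by
        rw [← hd]; exact hcast
      rw [Nat.cast_add] at h1
      linear_combination h1
    have hdval : Sp.card - Sn.card = q := by
      rcases (by omega : Sp.card - Sn.card = q - 1 ∨ Sp.card - Sn.card = q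
          ∨ Sp.card - Sn.card = q + 1) with h | h | h
      · exfalso
        rw [h, Nat.cast_sub (by omega), Nat.cast_one, S.qzero] at hdF
        exact (one_ne_zero : (1:F) ≠ 0) (by linear_combination -hdF)
      · exact h
      · exfalso
        rw [h, Nat.cast_add, Nat.cast_one, S.qzero] at hdF
        exact (one_ne_zero : (1:F) ≠ 0) (by linear_combination hdF)
    have hSn0 : Sn.card = 0 := by omega
    have hMcard : M.card = q := by omega
    have hzR : ((univ.filter fun s : F => s ^ (q + 1) = 1).filter
        (fun s => ¬ R s ≠ 0)).card = 1 := by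
      have h := Finset.card_filter_add_card_filter_not
        (s := univ.filter fun s : F => s ^ (q + 1) = 1) (p := fun s => R s ≠ 0)
      rw [S.mu_card] at h
      rw [← hM] at h
      omega
    obtain ⟨s₀, hs₀⟩ := Finset.card_eq_one.mp hzR
    have hs₀mem : s₀ ∈ (univ.filter fun s : F => s ^ (q + 1) = 1).filter
        (fun s => ¬ R s ≠ 0) := by rw [hs₀]; exact mem_singleton_self s₀
    rw [mem_filter, mem_filter, not_not] at hs₀mem
    obtain ⟨⟨-, hs₀mu⟩, hs₀R⟩ := hs₀mem
    rw [hR] at hs₀R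
    dsimp only at hs₀R
    have hk : a ^ q * (a ^ q)⁻¹ = 1 := mul_inv_cancel₀ haq
    have hs₁R : a ^ q * ((a ^ q)⁻¹ - s₀) ^ 2 - ((a ^ q)⁻¹ - s₀) + a = 0 := by
      linear_combination hs₀R + ((a ^ q)⁻¹ - 2 * s₀) * hk
    have hs₀0 : s₀ ≠ 0 := by
      rintro rfl
      simp only [ne_eq, OfNat.ofNat_ne_zero, not_false_eq_true, zero_pow, mul_zero,
        sub_zero, zero_add] at hs₀R
      exact hane hs₀R
    have hs₁eq : (a ^ q)⁻¹ - s₀ = a * (a ^ q * s₀)⁻¹ := by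
      rw [mul_inv, ← mul_assoc]
      field_simp
      linear_combination -hs₀R
    have hs₁mu : ((a ^ q)⁻¹ - s₀) ^ (q + 1) = 1 := by
      rw [hs₁eq, mul_pow, mul_inv, mul_pow, inv_pow, inv_pow, hs₀mu, inv_one, mul_one]
      have haqq : (a ^ q) ^ (q + 1) = a ^ (q + 1) := by
        rw [pow_succ, pow_succ, S.pow_pow, mul_comm]
      rw [haqq, mul_inv_cancel₀ (pow_ne_zero _ hane)]
    have hs₁mem : (a ^ q)⁻¹ - s₀ ∈ (univ.filter fun s : F => s ^ (q + 1) = 1).filter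
        (fun s => ¬ R s ≠ 0) := by
      rw [mem_filter, mem_filter, not_not, hR]
      exact ⟨⟨mem_univ _, hs₁mu⟩, hs₁R⟩
    rw [hs₀, mem_singleton] at hs₁mem
    have h2s₀ : a ^ q * (2 * s₀) = 1 := by
      have h1 : (a ^ q)⁻¹ = 2 * s₀ := by linear_combination hs₁mem
      rw [← h1]; exact hk
    have hs₀val : s₀ = 2 * a := by
      linear_combination -2 * hs₀R + s₀ * h2s₀
    apply ha'
    linear_combination h2s₀ - 2 * a ^ q * hs₀val

end CaseB

section Count
variable {a b : F}

/-- Characterization of parabolas meeting the curve in exactly 2q points. -/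
lemma char_iff (hane : a ≠ 0) (c : F) :
    (univ.filter fun x : F => gf q a b c x = 0).card = 2 * q ↔
    (4 * (a ^ q * a) = 1 ∧ 2 * a * b ^ q + b = 0 ∧
      ∃ δ : F, δ ^ q * (2 * a) = -δ ∧ δ ≠ 0 ∧ δ ^ 2 = b ^ 2 - 4 * a * (c ^ q + c)) := by
  have hq3 := S.hq3
  constructor
  · intro h
    by_cases h1 : 4 * (a ^ q * a) = 1
    · by_cases h2 : 2 * a * b ^ q + b = 0
      · refine ⟨h1, h2, ?_⟩
        by_contra h3
        have := S.caseA_badc h1 h2 h3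
        omega
      · have := S.caseA_badb (c := c) h1 h2
        omega
    · exact absurd h (S.caseB h1 hane)
  · rintro ⟨h1, h2, δ, hd1, hd2, hd3⟩
    exact S.caseA_good h1 h2 δ hd1 hd2 hd3

/-- count of good leading coefficients `a`. -/
lemma count_a : (univ.filter fun a : F => 4 * (a ^ q * a) = 1).card = q + 1 := by
  have h4q : (4 : F) ^ (q - 1) * 4 = 4 := by rw [S.pow_q_sub_one_mul, S.frob_four]
  have h4inv : ((4 : F)⁻¹) ^ (q - 1) = 1 := by
    rw [inv_pow, inv_eq_one]
    have h4q' : (4 : F) ^ (q - 1) * 4 = 1 * 4 := by rw [h4q, one_mul]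
    exact mul_right_cancel₀ S.four_ne h4q'
  have hset : (univ.filter fun a : F => 4 * (a ^ q * a) = 1)
      = univ.filter fun a : F => a ^ (q + 1) = (4 : F)⁻¹ := by
    ext x
    simp only [mem_filter, mem_univ, true_and, pow_succ]
    constructor
    · intro h
      exact eq_inv_of_mul_eq_one_left (by linear_combination h)
    · intro h
      rw [h]
      exact mul_inv_cancel₀ S.four_ne
  rw [hset]
  exact S.fiber_qp1 _ h4inv

/-- count of good `b` for a fixed good `a`. -/
lemma count_b (ha : 4 * (a ^ q * a) = 1) :
    (univ.filter fun b : F => 2 * a * b ^ q + b = 0).card = q := by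
  have hset : (univ.filter fun b : F => 2 * a * b ^ q + b = 0)
      = univ.filter fun w : F => w ^ q * (2 * a) = -w := by
    ext w
    simp only [mem_filter, mem_univ, true_and]
    constructor
    · intro h; linear_combination h
    · intro h; linear_combination h
  rw [hset]
  exact S.W_card ha

/-- count of good `c` for fixed good `(a, b)`. -/
lemma count_c (ha : 4 * (a ^ q * a) = 1) (hb : 2 * a * b ^ q + b = 0)
    (m : ℕ) (hm2 : 2 * m + 1 = q) :
    (univ.filter fun c : F => ∃ δ : F, δ ^ q * (2 * a) = -δ ∧ δ ≠ 0 ∧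
      δ ^ 2 = b ^ 2 - 4 * a * (c ^ q + c)).card = q * m := by
  classical
  have hane : a ≠ 0 := by
    rintro rfl
    rw [mul_zero, mul_zero] at ha
    exact one_ne_zero ha.symm
  have h2a : (2 * a : F) ≠ 0 := S.two_a_ne ha
  have h4a : (4 * a : F) ≠ 0 := by
    have h4 : (4 * a : F) = 2 * (2 * a) := by ring
    rw [h4]; exact mul_ne_zero S.two_ne h2a
  set D := univ.filter (fun δ : F => δ ^ q * (2 * a) = -δ ∧ δ ≠ 0) with hD
  have hDcard : D.card = q - 1 := by
    have hlam : (-(2 * a)⁻¹ : F) ^ (q + 1) = 1 := by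
      have he : Even (q + 1) := S.hodd.add_one
      rw [he.neg_pow, inv_pow, S.twoa_pow' ha, inv_one]
    have hset : D = univ.filter fun δ : F => δ ^ (q - 1) = -(2 * a)⁻¹ := by
      ext δ
      simp only [hD, mem_filter, mem_univ, true_and]
      constructor
      · rintro ⟨h1, h2⟩
        have h3 : δ ^ (q - 1) * δ * (2 * a) = -δ := by
          rw [S.pow_q_sub_one_mul]; exact h1
        have h4 : δ ^ (q - 1) * (2 * a) = -1 := by
          have h5 : δ ^ (q - 1) * (2 * a) * δ = -1 * δ := by linear_combination h3
          exact mul_right_cancel₀ h2 h5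
        have h6 : δ ^ (q - 1) * (2 * a) = (-(2 * a)⁻¹) * (2 * a) := by
          rw [h4]; field_simp; rw [div_self S.two_ne]
        exact mul_right_cancel₀ h2a h6
      · intro h
        have hδ0 : δ ≠ 0 := by
          intro h0
          rw [h0, zero_pow (by have := S.hq3; omega)] at h
          have : (2 * a : F) * 0 = 2 * a * (-(-(2 * a)⁻¹)) := by rw [← h]; ring
          rw [mul_zero, neg_neg, mul_inv_cancel₀ h2a] at this
          exact one_ne_zero this.symm
        constructor
        · rw [← S.pow_q_sub_one_mul, h]
          field_simp; rw [div_self S.two_ne]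
        · exact hδ0
    rw [hset]
    exact S.fiber_qm1 _ hlam
  set V := D.image (fun δ : F => (b ^ 2 - δ ^ 2) * (4 * a)⁻¹) with hV
  have hVcard : V.card = m := by
    have hdec := Finset.card_eq_sum_card_fiberwise
      (fun δ (hδ : δ ∈ D) => mem_image_of_mem (fun δ : F => (b ^ 2 - δ ^ 2) * (4 * a)⁻¹) hδ)
    have hfib : ∀ v ∈ V, (D.filter fun δ => (b ^ 2 - δ ^ 2) * (4 * a)⁻¹ = v).card = 2 := by
      intro v hv
      obtain ⟨δ, hδD, rfl⟩ := mem_image.mp hv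
      have hδmem := hδD
      simp only [hD, mem_filter, mem_univ, true_and] at hδmem
      obtain ⟨hδ1, hδ0⟩ := hδmem
      have hfeq : (D.filter fun δ' => (b ^ 2 - δ' ^ 2) * (4 * a)⁻¹
          = (b ^ 2 - δ ^ 2) * (4 * a)⁻¹) = {δ, -δ} := by
        ext δ'
        simp only [mem_filter, mem_insert, mem_singleton, hD, mem_univ, true_and]
        constructor
        · rintro ⟨⟨-, -⟩, h2⟩
          have h3 : δ' ^ 2 = δ ^ 2 := by
            have := mul_right_cancel₀ (inv_ne_zero h4a) h2
            linear_combination -this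
          have h4 : (δ' - δ) * (δ' + δ) = 0 := by linear_combination h3
          rcases mul_eq_zero.mp h4 with h | h
          · left; linear_combination h
          · right; linear_combination h
        · rintro (rfl | rfl)
          · exact ⟨⟨hδ1, hδ0⟩, rfl⟩
          · refine ⟨⟨?_, neg_ne_zero.mpr hδ0⟩, by ring_nf⟩
            rw [S.frob_neg]
            linear_combination -hδ1
      rw [hfeq]
      rw [card_insert_of_notMem, card_singleton]
      simp only [mem_singleton]
      intro h
      have h2 : (2 : F) * δ = 0 := by linear_combination h
      rcases mul_eq_zero.mp h2 with h | h
      · exact S.two_ne h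
      · exact hδ0 h
    rw [Finset.sum_congr rfl hfib, sum_const, smul_eq_mul] at hdec
    rw [hDcard] at hdec
    omega
  have hVK : ∀ v ∈ V, v ^ q = v := by
    intro v hv
    obtain ⟨δ, hδD, rfl⟩ := mem_image.mp hv
    simp only [hD, mem_filter, mem_univ, true_and] at hδD
    obtain ⟨hδ1, hδ0⟩ := hδD
    have hbq2 : (b ^ q) ^ 2 * (4 * a ^ 2) = b ^ 2 := by
      have hbq : b ^ q * (2 * a) = -b := by linear_combination hb
      calc (b ^ q) ^ 2 * (4 * a ^ 2) = (b ^ q * (2 * a)) ^ 2 := by ring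
        _ = b ^ 2 := by rw [hbq]; ring
    have hdq2 : (δ ^ q) ^ 2 * (4 * a ^ 2) = δ ^ 2 := by
      calc (δ ^ q) ^ 2 * (4 * a ^ 2) = (δ ^ q * (2 * a)) ^ 2 := by ring
        _ = δ ^ 2 := by rw [hδ1]; ring
    have haq4 : a ^ q * (4 * a) = 1 := by linear_combination ha
    rw [mul_pow, S.frob_sub, inv_pow]
    have h4aq : (4 * a : F) ^ q = 4 * a ^ q := by rw [mul_pow, S.frob_four]
    have hb2 : (b ^ 2) ^ q = (b ^ q) ^ 2 := by rw [← pow_mul, mul_comm, pow_mul]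
    have hd2 : (δ ^ 2) ^ q = (δ ^ q) ^ 2 := by rw [← pow_mul, mul_comm, pow_mul]
    rw [h4aq, hb2, hd2]
    have haqne : (a ^ q : F) ≠ 0 := pow_ne_zero q hane
    have hI1 : (4 * a ^ q : F)⁻¹ = a :=
      inv_eq_of_mul_eq_one_right (by linear_combination haq4 : (4 * a ^ q) * a = 1)
    have hI2 : (4 * a : F)⁻¹ = a ^ q :=
      inv_eq_of_mul_eq_one_right (by linear_combination haq4 : (4 * a) * a ^ q = 1)
    rw [hI1, hI2]
    linear_combination (a ^ q) * hbq2 - (a ^ q) * hdq2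
      + (a * (δ ^ q) ^ 2 - a * (b ^ q) ^ 2) * haq4
  -- condition on c is T(c) ∈ V, counted fiberwise
  have hset : (univ.filter fun c : F => ∃ δ : F, δ ^ q * (2 * a) = -δ ∧ δ ≠ 0 ∧
      δ ^ 2 = b ^ 2 - 4 * a * (c ^ q + c))
      = univ.filter fun c : F => (c ^ q + c) ∈ V := by
    ext c
    simp only [mem_filter, mem_univ, true_and]
    constructor
    · rintro ⟨δ, hδ1, hδ0, hδ2⟩
      rw [hV, mem_image]
      refine ⟨δ, ?_, ?_⟩
      · simp only [hD, mem_filter, mem_univ, true_and]; exact ⟨hδ1, hδ0⟩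
      · rw [hδ2]
        have hI : (4 * a : F)⁻¹ = a ^ q :=
          inv_eq_of_mul_eq_one_right (by linear_combination ha : (4 * a) * a ^ q = 1)
        rw [hI]; linear_combination (c ^ q + c) * ha
    · intro hc
      rw [hV, mem_image] at hc
      obtain ⟨δ, hδD, hδv⟩ := hc
      simp only [hD, mem_filter, mem_univ, true_and] at hδD
      refine ⟨δ, hδD.1, hδD.2, ?_⟩
      rw [← hδv]
      have hI : (4 * a : F)⁻¹ = a ^ q :=
        inv_eq_of_mul_eq_one_right (by linear_combination ha : (4 * a) * a ^ q = 1)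
      rw [hI]; linear_combination (b ^ 2 - δ ^ 2) * ha
  rw [hset]
  have hmap : ∀ c ∈ (univ.filter fun c : F => (c ^ q + c) ∈ V), (c ^ q + c) ∈ V := by
    intro c hc
    simp only [mem_filter, mem_univ, true_and] at hc
    exact hc
  have hdec := Finset.card_eq_sum_card_fiberwise hmap
  have hfib : ∀ v ∈ V, ((univ.filter fun c : F => (c ^ q + c) ∈ V).filter
      fun c => c ^ q + c = v).card = q := by
    intro v hv
    have h1 : ((univ.filter fun c : F => (c ^ q + c) ∈ V).filter fun c => c ^ q + c = v)
        = univ.filter fun c : F => c ^ q + c = v := by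
      ext c
      simp only [mem_filter, mem_univ, true_and]
      constructor
      · rintro ⟨-, h⟩; exact h
      · intro h; exact ⟨h ▸ hv, h⟩
    rw [h1]
    exact S.T_fiber v (hVK v hv)
  rw [Finset.sum_congr rfl hfib, sum_const, smul_eq_mul, hVcard] at hdec
  rw [hdec, mul_comm]

end Count

end Setup

/-- generic product-count lemma. -/
lemma card_pair {α β : Type*} [Fintype α] [Fintype β]
    (Q1 : α → Prop) (Q2 : α → β → Prop) [DecidablePred Q1]
    [∀ a, DecidablePred (Q2 a)] [DecidablePred fun ab : α × β => Q1 ab.1 ∧ Q2 ab.1 ab.2]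
    {n1 n2 : ℕ}
    (h1 : (univ.filter Q1).card = n1)
    (h2 : ∀ a, Q1 a → (univ.filter (Q2 a)).card = n2) :
    (univ.filter fun ab : α × β => Q1 ab.1 ∧ Q2 ab.1 ab.2).card = n1 * n2 := by
  classical
  have hmap : ∀ ab ∈ (univ.filter fun ab : α × β => Q1 ab.1 ∧ Q2 ab.1 ab.2),
      ab.1 ∈ univ.filter Q1 := by
    intro ab hab
    simp only [mem_filter, mem_univ, true_and] at hab ⊢
    exact hab.1
  have hdec := Finset.card_eq_sum_card_fiberwise hmap
  have hfib : ∀ x ∈ univ.filter Q1,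
      ((univ.filter fun ab : α × β => Q1 ab.1 ∧ Q2 ab.1 ab.2).filter
        fun ab => ab.1 = x).card = n2 := by
    intro x hx
    simp only [mem_filter, mem_univ, true_and] at hx
    rw [← h2 x hx]
    refine Finset.card_bij' (fun ab _ => ab.2) (fun y _ => (x, y)) ?hi ?hj ?left ?right
    case hi =>
      intro ab hab
      rw [mem_filter] at hab
      obtain ⟨habs, he⟩ := hab
      rw [mem_filter] at habs ⊢
      exact ⟨mem_univ _, he ▸ habs.2.2⟩
    case hj =>
      intro y hy
      rw [mem_filter] at hy
      rw [mem_filter, mem_filter]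
      exact ⟨⟨mem_univ _, hx, hy.2⟩, rfl⟩
    case left =>
      intro ab hab
      rw [mem_filter] at hab
      show (x, ab.2) = ab
      rw [← hab.2]
    case right =>
      intro y _
      rfl
  rw [hdec, Finset.sum_congr rfl hfib, sum_const, smul_eq_mul, h1]

namespace Setup
variable (S : Setup q F)
include S

open scoped Classical in
lemma triple_card (m : ℕ) (hm2 : 2 * m + 1 = q) :
    (univ.filter fun abc : F × F × F =>
      4 * (abc.1 ^ q * abc.1) = 1 ∧ (2 * abc.1 * abc.2.1 ^ q + abc.2.1 = 0 ∧
      ∃ δ : F, δ ^ q * (2 * abc.1) = -δ ∧ δ ≠ 0 ∧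
        δ ^ 2 = abc.2.1 ^ 2 - 4 * abc.1 * (abc.2.2 ^ q + abc.2.2))).card
    = (q + 1) * (q * (q * m)) := by
  classical
  have := card_pair (fun a : F => 4 * (a ^ q * a) = 1)
    (fun a (bc : F × F) => 2 * a * bc.1 ^ q + bc.1 = 0 ∧
      ∃ δ : F, δ ^ q * (2 * a) = -δ ∧ δ ≠ 0 ∧
        δ ^ 2 = bc.1 ^ 2 - 4 * a * (bc.2 ^ q + bc.2))
    (n1 := q + 1) (n2 := q * (q * m)) S.count_a ?_
  · convert this using 2
  · intro a ha
    have := card_pair (fun b : F => 2 * a * b ^ q + b = 0)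
      (fun b (c : F) => ∃ δ : F, δ ^ q * (2 * a) = -δ ∧ δ ≠ 0 ∧
        δ ^ 2 = b ^ 2 - 4 * a * (c ^ q + c))
      (n1 := q) (n2 := q * m) (S.count_b ha) ?_
    · convert this using 2
    · intro b hb
      exact S.count_c ha hb m hm2

end Setup
end ParabolaAux

open ParabolaAux Finset in
/-- For odd `q`, the number of parabolas `y = ax² + bx + c` (`a ≠ 0`) — that is, of
smooth conics through `P_∞` tangent to the Hermitian curve at `P_∞` — meeting the
Hermitian curve `y^q + y = x^(q+1)` in exactly `2q` affine rational points is
`q²(q+1)(q-1)/2`. -/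
theorem parabola_count (p e q : ℕ) (hp : p.Prime) (hq : q = p ^ e) (he : 0 < e)
    (hodd : Odd q) (F : Type) [Field F] [Fintype F] [CharP F p]
    (hF : Fintype.card F = q ^ 2) :
    Nat.card {abc : F × F × F // abc.1 ≠ 0 ∧
      Nat.card {xy : F × F // xy.2 = abc.1 * xy.1 ^ 2 + abc.2.1 * xy.1 + abc.2.2 ∧
        xy.2 ^ q + xy.2 = xy.1 ^ (q + 1)} = 2 * q}
      = q ^ 2 * (q + 1) * (q - 1) / 2 := by
  classical
  haveI := Fact.mk hp
  have hp2 : p ≠ 2 := by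
    rintro rfl
    rw [hq] at hodd
    have heven : Even (2 ^ e) := (Nat.even_pow).mpr ⟨even_iff_two_dvd.mpr dvd_rfl, he.ne'⟩
    exact (Nat.not_even_iff_odd.mpr hodd) heven
  have hq3 : 3 ≤ q := by
    have hp3 : 3 ≤ p := by
      have h2 := hp.two_le
      omega
    calc 3 ≤ p := hp3
      _ ≤ p ^ e := Nat.le_self_pow he.ne' p
      _ = q := hq.symm
  have S : Setup q F :=
    { hq3 := hq3
      hodd := hodd
      hF := hF
      frob_add := by
        intro x y
        rw [hq]
        exact add_pow_char_pow x y p e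
      two_ne := by
        intro h
        have h2 : ((2 : ℕ) : F) = 0 := by exact_mod_cast h
        have h3 := (CharP.cast_eq_zero_iff F p 2).mp h2
        exact hp2 ((Nat.prime_dvd_prime_iff_eq hp Nat.prime_two).mp h3)
      qzero := by
        rw [hq]
        push_cast
        rw [CharP.cast_eq_zero F p]
        exact zero_pow he.ne' }
  have inner : ∀ a b c : F,
      Nat.card {xy : F × F // xy.2 = a * xy.1 ^ 2 + b * xy.1 + c ∧
        xy.2 ^ q + xy.2 = xy.1 ^ (q + 1)}
      = (univ.filter fun x : F => gf q a b c x = 0).card := by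
    intro a b c
    have e1 : {xy : F × F // xy.2 = a * xy.1 ^ 2 + b * xy.1 + c ∧
        xy.2 ^ q + xy.2 = xy.1 ^ (q + 1)} ≃ {x : F // gf q a b c x = 0} :=
      { toFun := fun pp => ⟨pp.1.1, by
          obtain ⟨h1, h2⟩ := pp.2
          unfold gf
          rw [← h1, h2, sub_self]⟩
        invFun := fun pp => ⟨(pp.1, a * pp.1 ^ 2 + b * pp.1 + c), rfl, by
          have h := pp.2
          unfold gf at h
          linear_combination h⟩
        left_inv := by
          rintro ⟨⟨x, y⟩, h1, h2⟩
          simp only [Subtype.mk.injEq, Prod.mk.injEq, true_and]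
          exact h1.symm
        right_inv := fun pp => rfl }
    rw [Nat.card_congr e1, Nat.card_eq_fintype_card, Fintype.card_subtype]
  rw [Nat.card_eq_fintype_card, Fintype.card_subtype]
  have hm2 : 2 * ((q - 1) / 2) + 1 = q := by
    obtain ⟨r, hr⟩ := hodd
    omega
  have hfilter : (univ.filter fun abc : F × F × F => abc.1 ≠ 0 ∧
      Nat.card {xy : F × F // xy.2 = abc.1 * xy.1 ^ 2 + abc.2.1 * xy.1 + abc.2.2 ∧
        xy.2 ^ q + xy.2 = xy.1 ^ (q + 1)} = 2 * q)
      = univ.filter (fun abc : F × F × F =>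
        4 * (abc.1 ^ q * abc.1) = 1 ∧ (2 * abc.1 * abc.2.1 ^ q + abc.2.1 = 0 ∧
        ∃ δ : F, δ ^ q * (2 * abc.1) = -δ ∧ δ ≠ 0 ∧
          δ ^ 2 = abc.2.1 ^ 2 - 4 * abc.1 * (abc.2.2 ^ q + abc.2.2))) := by
    ext abc
    obtain ⟨a, b, c⟩ := abc
    simp only [mem_filter, mem_univ, true_and]
    rw [inner a b c]
    constructor
    · rintro ⟨hne, hcount⟩
      exact (S.char_iff hne c).mp hcount
    · intro h
      have hne : a ≠ 0 := by
        rintro rfl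
        rw [zero_pow S.hq0.ne', zero_mul, mul_zero] at h
        exact one_ne_zero h.1.symm
      exact ⟨hne, (S.char_iff hne c).mpr h⟩
  rw [hfilter, S.triple_card ((q - 1) / 2) hm2]
  have harith : q ^ 2 * (q + 1) * (q - 1) = ((q + 1) * (q * (q * ((q - 1) / 2)))) * 2 := by
    have h1 : q - 1 = 2 * ((q - 1) / 2) := by omega
    calc q ^ 2 * (q + 1) * (q - 1) = q ^ 2 * (q + 1) * (2 * ((q - 1) / 2)) := by rw [← h1]
      _ = ((q + 1) * (q * (q * ((q - 1) / 2)))) * 2 := by ring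
  rw [harith, Nat.mul_div_cancel _ (by norm_num)]
end
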